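/- arXiv:2310.11443 — 11 statements merged into one kernel-verified Lean document; each statement's English description precedes it below -/
import Mathlib

section
/- Let n, m, k ≥ 3 and let T = (t₁,…,tₙ) ∈ ℂⁿ, S = (s₁,…,s_m) ∈ ℂᵐ, R = (r₁,…,r_k) ∈ ℂᵏ. Then for every i ∈ {1,…,n}, (T ∘ᵢ S) ∘_{i+m−1} R ≠ T ∘ᵢ (S ∘ₘ R). (In the paper this is stated for quiddity sequences; the proof shows the two tuples always differ entrywise, e.g. one has entry t_i+s₁+1 where the other has t_i+s₁+2.) -/
/-- The partial composition `T ∘ᵢ S` of two tuples (lists) of complex numbers, with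
`1`-based index `i`.  For `1 ≤ i ≤ n-1` (i.e. `i < T.length`) it is
`(t₁,…,t_{i−1}, t_i+s₁+1, s₂,…,s_{m−1}, s_m+1, t_{i+1}+1, t_{i+2},…,tₙ)`,
and for `i = n` it is `(t₁+1, t₂,…,t_{n−1}, tₙ+s₁+1, s₂,…,s_{m−1}, s_m+1)`. -/
noncomputable def qcomp (T S : List ℂ) (i : ℕ) : List ℂ :=
  if i < T.length then
    T.take (i - 1) ++ (T.getD (i - 1) 0 + S.getD 0 0 + 1) ::
      ((S.drop 1).dropLast ++ (S.getLastD 0 + 1) :: (T.getD i 0 + 1) :: T.drop (i + 1))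
  else
    (T.getD 0 0 + 1) :: ((T.drop 1).dropLast ++ (T.getLastD 0 + S.getD 0 0 + 1) ::
      ((S.drop 1).dropLast ++ [S.getLastD 0 + 1]))

private lemma getD_take' {α} (l : List α) (d : α) {i j : ℕ} (h : i < j) :
    (l.take j).getD i d = l.getD i d := by
  simp [List.getD_eq_getElem?_getD, List.getElem?_take, h]

private lemma getD_drop1_dropLast {α} (l : List α) (d : α) {j : ℕ} (h : j + 2 < l.length) :
    ((l.drop 1).dropLast).getD j d = l.getD (j + 1) d := by
  rw [List.getD_eq_getElem?_getD, List.getD_eq_getElem?_getD, List.getElem?_dropLast,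
    if_pos (by simp only [List.length_drop]; omega), List.getElem?_drop, Nat.add_comm]

/-- For all `i ∈ {1,…,n}` one has `(T ∘ᵢ S) ∘_{i+m−1} R ≠ T ∘ᵢ (S ∘ₘ R)`. -/
theorem quiddity_comp_not_assoc_at_m (n m k : ℕ) (hn : 3 ≤ n) (hm : 3 ≤ m) (hk : 3 ≤ k)
    (T S R : List ℂ) (hT : T.length = n) (hS : S.length = m) (hR : R.length = k)  :
    ∀ i, 1 ≤ i → i ≤ n →
      qcomp (qcomp T S i) R (i + m - 1) ≠ qcomp T (qcomp S R m) i := by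
  intro i h1 hi heq
  obtain ⟨i', rfl⟩ : ∃ i', i = i' + 1 := ⟨i - 1, by omega⟩
  have key := congrArg (fun l => l.getD i' 0) heq
  have hBne : ¬ m < S.length := by omega
  have hB0 : (qcomp S R m).getD 0 0 = S.getD 0 0 + 1 := by
    rw [qcomp, if_neg hBne, List.getD_cons_zero]
  by_cases hc : i' + 1 < n
  · -- case i < n
    have hTlt : i' + 1 < T.length := by omega
    have hA : qcomp T S (i' + 1) = T.take i' ++ (T.getD i' 0 + S.getD 0 0 + 1) ::
        ((S.drop 1).dropLast ++ (S.getLastD 0 + 1) :: (T.getD (i' + 1) 0 + 1) ::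
          T.drop (i' + 1 + 1)) := by
      rw [qcomp, if_pos hTlt, Nat.add_sub_cancel]
    have h3 : (T.take i').length = i' := by simp [hT]; omega
    have hAlen : (qcomp T S (i' + 1)).length = n + m - 1 := by
      rw [hA]; simp [hT, hS]; omega
    have h2 : i' + 1 + m - 1 < (qcomp T S (i' + 1)).length := by omega
    have hL : (qcomp (qcomp T S (i' + 1)) R (i' + 1 + m - 1)).getD i' 0 =
        T.getD i' 0 + S.getD 0 0 + 1 := by
      rw [qcomp, if_pos h2,
        List.getD_append _ _ _ _ (by rw [List.length_take, hAlen]; omega),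
        getD_take' _ _ (by omega), hA,
        List.getD_append_right _ _ _ _ (le_of_eq h3), h3, Nat.sub_self,
        List.getD_cons_zero]
    have hR2 : (qcomp T (qcomp S R m) (i' + 1)).getD i' 0 =
        T.getD i' 0 + (S.getD 0 0 + 1) + 1 := by
      rw [qcomp, if_pos hTlt, Nat.add_sub_cancel,
        List.getD_append_right _ _ _ _ (le_of_eq h3), h3, Nat.sub_self,
        List.getD_cons_zero, hB0]
    rw [hL, hR2] at key
    have : (0 : ℂ) = 1 := by linear_combination key
    exact zero_ne_one this
  · -- case i = n
    have hin : i' + 1 = n := by omega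
    obtain ⟨j, rfl⟩ : ∃ j, i' = j + 1 := ⟨i' - 1, by omega⟩
    have hTnlt : ¬ (j + 1 + 1 < T.length) := by omega
    have hA : qcomp T S (j + 1 + 1) = (T.getD 0 0 + 1) :: ((T.drop 1).dropLast ++
        (T.getLastD 0 + S.getD 0 0 + 1) :: ((S.drop 1).dropLast ++ [S.getLastD 0 + 1])) := by
      rw [qcomp, if_neg hTnlt]
    have hAlen : (qcomp T S (j + 1 + 1)).length = n + m - 1 := by
      rw [hA]; simp [hT, hS]; omega
    have houter : ¬ (j + 1 + 1 + m - 1 < (qcomp T S (j + 1 + 1)).length) := by omega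
    have h4 : ((T.drop 1).dropLast).length = j := by simp [hT]; omega
    have hAget : (qcomp T S (j + 1 + 1)).getD (j + 1) 0 =
        T.getLastD 0 + S.getD 0 0 + 1 := by
      rw [hA, List.getD_cons_succ, List.getD_append_right _ _ _ _ (le_of_eq h4), h4,
        Nat.sub_self, List.getD_cons_zero]
    have hL : (qcomp (qcomp T S (j + 1 + 1)) R (j + 1 + 1 + m - 1)).getD (j + 1) 0 =
        T.getLastD 0 + S.getD 0 0 + 1 := by
      rw [qcomp, if_neg houter, List.getD_cons_succ,
        List.getD_append _ _ _ _ (by simp only [List.length_dropLast, List.length_drop, hAlen]; omega),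
        getD_drop1_dropLast _ _ (by omega), hAget]
    have hR2 : (qcomp T (qcomp S R m) (j + 1 + 1)).getD (j + 1) 0 =
        T.getLastD 0 + (S.getD 0 0 + 1) + 1 := by
      rw [qcomp, if_neg hTnlt, List.getD_cons_succ,
        List.getD_append_right _ _ _ _ (le_of_eq h4), h4, Nat.sub_self,
        List.getD_cons_zero, hB0]
    rw [hL, hR2] at key
    have : (0 : ℂ) = 1 := by linear_combination key
    exact zero_ne_one this
end

section
/- Let A = (a₁,…,aₙ) and B = (b₁,…,b_m) be generalized quiddity sequences (of lengths n, m ≥ 2). Then for every k ∈ {1,…,n}, the tuple A •ₖ B is a generalized quiddity sequence of length n+m−1. -/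
/-- The 2×2 matrix `M(a) = [[a, -1], [1, 0]]`. -/
noncomputable def Mmat (a : ℂ) : Matrix (Fin 2) (Fin 2) ℂ := !![a, -1; 1, 0]

/-- A generalized quiddity sequence: a tuple `(a₁,…,aₙ)` with
`M(aₙ)·M(aₙ₋₁)···M(a₁) = -Id`. -/
def IsGQS (A : List ℂ) : Prop := (A.reverse.map Mmat).prod = -1

/-- The partial composition `A •ₖ B`, with `1`-based index `k`.  For `2 ≤ k ≤ n`
it is `(a₁,…,a_{k−2}, a_{k−1}+1, b₂+1, b₃,…,b_m, a_k+b₁+1, a_{k+1},…,aₙ)`,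
and for `k = 1` it is `(a₁+b₁+1, a₂,…,a_{n−1}, aₙ+1, b₂+1, b₃,…,b_m)`. -/
noncomputable def bcomp (A B : List ℂ) (k : ℕ) : List ℂ :=
  if k = 1 then
    (A.getD 0 0 + B.getD 0 0 + 1) :: ((A.drop 1).dropLast ++ (A.getLastD 0 + 1) ::
      (B.getD 1 0 + 1) :: B.drop 2)
  else
    A.take (k - 2) ++ (A.getD (k - 2) 0 + 1) :: (B.getD 1 0 + 1) ::
      (B.drop 2 ++ (A.getD (k - 1) 0 + B.getD 0 0 + 1) :: A.drop k)

noncomputable def Nmat (a : ℂ) : Matrix (Fin 2) (Fin 2) ℂ := !![0, 1; -1, a]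

noncomputable def Pr (L : List ℂ) : Matrix (Fin 2) (Fin 2) ℂ := (L.reverse.map Mmat).prod

lemma Pr_nil : Pr [] = 1 := rfl

lemma Pr_cons (a : ℂ) (L : List ℂ) : Pr (a :: L) = Pr L * Mmat a := by
  simp [Pr]

lemma Pr_append (L M : List ℂ) : Pr (L ++ M) = Pr M * Pr L := by
  simp [Pr]

lemma isGQS_iff (L : List ℂ) : IsGQS L ↔ Pr L = -1 := Iff.rfl

lemma M_mul_N (a : ℂ) : Mmat a * Nmat a = 1 := by
  simp [Mmat, Nmat, Matrix.mul_fin_two, Matrix.one_fin_two]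

lemma N_mul_M (a : ℂ) : Nmat a * Mmat a = 1 := by
  simp [Mmat, Nmat, Matrix.mul_fin_two, Matrix.one_fin_two]

lemma exists_two (l : List ℂ) (h : 2 ≤ l.length) : ∃ x y t, l = x :: y :: t := by
  match l, h with
  | x :: y :: t, _ => exact ⟨x, y, t, rfl⟩

lemma key1 (x y b₁ b₂ : ℂ) (X : Matrix (Fin 2) (Fin 2) ℂ) :
    Mmat (y + b₁ + 1) * (-(Nmat b₁ * Nmat b₂) * (Mmat (b₂ + 1) * (Mmat (x + 1) * X)))
      = Mmat y * (Mmat x * X) := by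
  have h : Mmat (y + b₁ + 1) * (-(Nmat b₁ * Nmat b₂) * (Mmat (b₂ + 1) * Mmat (x + 1)))
      = Mmat y * Mmat x := by
    ext i j
    fin_cases i <;> fin_cases j <;>
      simp [Mmat, Nmat, Matrix.mul_apply, Fin.sum_univ_two, Matrix.neg_apply] <;> ring
  calc Mmat (y + b₁ + 1) * (-(Nmat b₁ * Nmat b₂) * (Mmat (b₂ + 1) * (Mmat (x + 1) * X)))
      = (Mmat (y + b₁ + 1) * (-(Nmat b₁ * Nmat b₂) * (Mmat (b₂ + 1) * Mmat (x + 1)))) * X := by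
        simp only [mul_assoc]
    _ = (Mmat y * Mmat x) * X := by rw [h]
    _ = Mmat y * (Mmat x * X) := by rw [mul_assoc]

lemma key2 (a₁ an b₁ b₂ : ℂ) :
    -(Nmat b₁ * Nmat b₂) * (Mmat (b₂ + 1) * (Mmat (an + 1) *
      (-(Nmat an * Nmat a₁) * Mmat (a₁ + b₁ + 1)))) = -1 := by
  ext i j
  fin_cases i <;> fin_cases j <;>
    simp [Mmat, Nmat, Matrix.mul_apply, Fin.sum_univ_two, Matrix.neg_apply,
      Matrix.one_apply] <;> ring

lemma Pr_eq_of_GQS₂ (b₁ b₂ : ℂ) (C : List ℂ) (h : IsGQS (b₁ :: b₂ :: C)) :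
    Pr C = -(Nmat b₁ * Nmat b₂) := by
  rw [isGQS_iff, Pr_cons, Pr_cons] at h
  have h1 : Pr C * Mmat b₂ = -(Nmat b₁) := by
    have := congrArg (· * Nmat b₁) h
    simpa only [mul_assoc, M_mul_N, mul_one, neg_mul, one_mul] using this
  have h2 : Pr C = -(Nmat b₁) * Nmat b₂ := by
    have := congrArg (· * Nmat b₂) h1
    simpa only [mul_assoc, M_mul_N, mul_one] using this
  rw [h2, neg_mul]

/-- If `A` and `B` are generalized quiddity sequences of lengths `n, m ≥ 2`, then
`A •ₖ B` is a generalized quiddity sequence of length `n+m−1`, for every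
`k ∈ {1,…,n}`. -/
theorem gqs_closed_under_bullet (n m : ℕ) (hn : 2 ≤ n) (hm : 2 ≤ m) (A B : List ℂ)
    (hA : A.length = n) (hB : B.length = m) (hAq : IsGQS A) (hBq : IsGQS B) :
    ∀ k, 1 ≤ k → k ≤ n →
      IsGQS (bcomp A B k) ∧ (bcomp A B k).length = n + m - 1 := by
  obtain ⟨b₁, b₂, C, rfl⟩ := exists_two B (by omega)
  have hC : Pr C = -(Nmat b₁ * Nmat b₂) := Pr_eq_of_GQS₂ b₁ b₂ C hBq
  have hCl : C.length = m - 2 := by simp at hB; omega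
  intro k hk1 hkn
  rcases eq_or_lt_of_le hk1 with hk | hk2
  · -- case k = 1
    subst hk
    obtain ⟨a₁, a, R, rfl⟩ := exists_two A (by omega)
    have hne : (a :: R) ≠ [] := by simp
    set l := R.getLastD a with hl
    set D := (a :: R).dropLast with hD
    have hdec : D ++ [l] = a :: R := by
      rw [hl, ← List.getLast_eq_getLastD (a := a) (l := R) hne]
      exact List.dropLast_append_getLast hne
    have hbc : bcomp (a₁ :: a :: R) (b₁ :: b₂ :: C) 1 =
        (a₁ + b₁ + 1) :: (D ++ (l + 1) :: (b₂ + 1) :: C) := by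
      simp only [bcomp, reduceIte, List.drop_one, List.tail_cons, List.getD_cons_zero,
        List.getD_cons_succ, List.getLastD_cons, List.drop_succ_cons, List.drop_zero, hl, hD]
    have hAprod : Mmat l * (Pr D * Mmat a₁) = -1 := by
      have h0 : Pr (a₁ :: (D ++ [l])) = -1 := by rw [hdec]; exact hAq
      rw [Pr_cons, Pr_append, Pr_cons, Pr_nil, one_mul, mul_assoc] at h0
      exact h0
    have e1 : Pr D * Mmat a₁ = -(Nmat l) := by
      have := congrArg (Nmat l * ·) hAprod
      simpa only [← mul_assoc, N_mul_M, one_mul, mul_neg, mul_one] using this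
    have hmid : Pr D = -(Nmat l * Nmat a₁) := by
      have := congrArg (· * Nmat a₁) e1
      simpa only [mul_assoc, M_mul_N, mul_one, neg_mul] using this
    constructor
    · rw [isGQS_iff, hbc, Pr_cons, Pr_append, Pr_cons, Pr_cons, hmid, hC]
      simp only [mul_assoc]
      exact key2 a₁ l b₁ b₂
    · rw [hbc]
      simp only [List.length_cons, List.length_append, hD, List.length_dropLast]
      simp at hA
      omega
  · -- case 2 ≤ k
    have hkne : k ≠ 1 := by omega
    have h1 : k - 2 < A.length := by omega
    have h2 : k - 1 < A.length := by omega
    set x := A.getD (k - 2) 0 with hx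
    set y := A.getD (k - 1) 0 with hy
    have hxe : x = A[k-2] := List.getD_eq_getElem A 0 h1
    have hye : y = A[k-1] := List.getD_eq_getElem A 0 h2
    have hdecA : A = A.take (k - 2) ++ x :: y :: A.drop k := by
      conv_lhs => rw [← List.take_append_drop (k - 2) A]
      congr 1
      rw [← List.getElem_cons_drop (as := A) (i := k-2) h1, hxe]
      congr 1
      have hkk : k - 2 + 1 = k - 1 := by omega
      rw [hkk, ← List.getElem_cons_drop (as := A) (i := k-1) h2, hye]
      have hkk2 : k - 1 + 1 = k := by omega
      rw [hkk2]
    have hbc : bcomp A (b₁ :: b₂ :: C) k =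
        A.take (k - 2) ++ (x + 1) :: (b₂ + 1) :: (C ++ (y + b₁ + 1) :: A.drop k) := by
      simp only [bcomp, if_neg hkne, List.getD_cons_zero, List.getD_cons_succ,
        List.drop_succ_cons, List.drop_zero]
      rfl
    have hAprod : Pr (x :: y :: A.drop k) * Pr (A.take (k - 2)) = -1 := by
      rw [← Pr_append, ← hdecA]; exact hAq
    rw [Pr_cons, Pr_cons] at hAprod
    constructor
    · rw [isGQS_iff, hbc, Pr_append, Pr_cons, Pr_cons, Pr_append, Pr_cons, hC]
      simp only [mul_assoc]
      rw [key1 x y b₁ b₂ (Pr (A.take (k - 2)))]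
      simpa only [mul_assoc] using hAprod
    · rw [hbc]
      simp only [List.length_append, List.length_cons, List.length_take, List.length_drop]
      omega
end

section
/- Let A = (a₁,…,aₙ) and B = (b₁,…,b_m) be generalized quiddity sequences (of lengths n, m ≥ 2). Then for every k ∈ {1,…,n}, the tuple A ⊞ₖ B is a generalized quiddity sequence of length n+m−2. -/
/-- The product `A ⊞ₖ B`, with `1`-based index `k`.  For `1 ≤ k ≤ n-1` (i.e.
`k < A.length`) it is `(a₁,…,a_{k−1}, a_k+b₁, b₂,…,b_{m−1}, b_m+a_{k+1}, a_{k+2},…,aₙ)`,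
and for `k = n` it is `(a₁+b_m, a₂,…,a_{n−1}, aₙ+b₁, b₂,…,b_{m−1})`. -/
noncomputable def boxcomp (A B : List ℂ) (k : ℕ) : List ℂ :=
  if k < A.length then
    A.take (k - 1) ++ (A.getD (k - 1) 0 + B.getD 0 0) ::
      ((B.drop 1).dropLast ++ (B.getLastD 0 + A.getD k 0) :: A.drop (k + 1))
  else
    (A.getD 0 0 + B.getLastD 0) :: ((A.drop 1).dropLast ++
      (A.getLastD 0 + B.getD 0 0) :: (B.drop 1).dropLast)

lemma Mmat_add (a b : ℂ) : Mmat (a + b) = -(Mmat a * Mmat 0 * Mmat b) := by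
  ext i j
  fin_cases i <;> fin_cases j <;>
    simp [Mmat, Matrix.mul_apply, Fin.sum_univ_two]

lemma M0_sq : Mmat 0 * Mmat 0 = -1 := by
  ext i j
  fin_cases i <;> fin_cases j <;>
    simp [Mmat, Matrix.mul_apply, Fin.sum_univ_two]

/-- The product of the `Mmat`s of a list, in reversed order. -/
noncomputable def Mprod (L : List ℂ) : Matrix (Fin 2) (Fin 2) ℂ :=
  (L.reverse.map Mmat).prod

lemma Mprod_append (X Y : List ℂ) : Mprod (X ++ Y) = Mprod Y * Mprod X := by
  simp [Mprod, List.reverse_append]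

lemma Mprod_cons (x : ℂ) (L : List ℂ) : Mprod (x :: L) = Mprod L * Mmat x := by
  simp [Mprod]

lemma Mprod_singleton (x : ℂ) : Mprod [x] = Mmat x := by simp [Mprod]

lemma middle_key (Q : Matrix (Fin 2) (Fin 2) ℂ) (b c x y : ℂ)
    (h : Mmat c * Q * Mmat b = -1) :
    Mmat (c + y) * Q * Mmat (x + b) = Mmat y * Mmat x := by
  have e1 : Mmat (c + y) = -(Mmat y * Mmat 0 * Mmat c) := by
    rw [add_comm]; exact Mmat_add y c
  have e2 : Mmat (x + b) = -(Mmat b * Mmat 0 * Mmat x) := by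
    rw [add_comm]; exact Mmat_add b x
  rw [e1, e2]
  calc -(Mmat y * Mmat 0 * Mmat c) * Q * -(Mmat b * Mmat 0 * Mmat x)
      = (Mmat y * Mmat 0) * (Mmat c * Q * Mmat b) * (Mmat 0 * Mmat x) := by noncomm_ring
    _ = (Mmat y * Mmat 0) * (-1) * (Mmat 0 * Mmat x) := by rw [h]
    _ = -(Mmat y * (Mmat 0 * Mmat 0) * Mmat x) := by noncomm_ring
    _ = Mmat y * Mmat x := by rw [M0_sq]; noncomm_ring

lemma end_key (Q R : Matrix (Fin 2) (Fin 2) ℂ) (a b c d : ℂ)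
    (hA : Mmat d * R * Mmat a = -1) (hB : Mmat c * Q * Mmat b = -1) :
    Q * Mmat (d + b) * R * Mmat (a + c) = -1 := by
  have e1 : Mmat (d + b) = -(Mmat b * Mmat 0 * Mmat d) := by
    rw [add_comm]; exact Mmat_add b d
  have e2 : Mmat (a + c) = -(Mmat a * Mmat 0 * Mmat c) := Mmat_add a c
  rw [e1, e2]
  have h1 : (-(Mmat c)) * (Q * Mmat b) = 1 := by
    calc (-(Mmat c)) * (Q * Mmat b) = -(Mmat c * Q * Mmat b) := by noncomm_ring
      _ = 1 := by rw [hB]; simp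
  have h2 : (Q * Mmat b) * (-(Mmat c)) = 1 := mul_eq_one_comm.mp h1
  have h3 : (Q * Mmat b) * Mmat c = -1 := by
    calc (Q * Mmat b) * Mmat c = -((Q * Mmat b) * (-(Mmat c))) := by noncomm_ring
      _ = -1 := by rw [h2]
  calc Q * -(Mmat b * Mmat 0 * Mmat d) * R * -(Mmat a * Mmat 0 * Mmat c)
      = (Q * Mmat b) * Mmat 0 * (Mmat d * R * Mmat a) * Mmat 0 * Mmat c := by noncomm_ring
    _ = (Q * Mmat b) * Mmat 0 * (-1) * Mmat 0 * Mmat c := by rw [hA]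
    _ = -((Q * Mmat b) * (Mmat 0 * Mmat 0) * Mmat c) := by noncomm_ring
    _ = -((Q * Mmat b) * (-1) * Mmat c) := by rw [M0_sq]
    _ = (Q * Mmat b) * Mmat c := by noncomm_ring
    _ = -1 := h3

lemma two_decomp (L : List ℂ) (h : 2 ≤ L.length) : ∃ a mid d, L = a :: (mid ++ [d]) := by
  cases L with
  | nil => simp at h
  | cons a t =>
    rcases List.eq_nil_or_concat t with rfl | ⟨mid, d, rfl⟩
    · simp at h
    · exact ⟨a, mid, d, by simp⟩

/-- If `A` and `B` are generalized quiddity sequences of lengths `n, m ≥ 2`, then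
`A ⊞ₖ B` is a generalized quiddity sequence of length `n+m−2`, for every
`k ∈ {1,…,n}`. -/
theorem gqs_closed_under_boxplus (n m : ℕ) (hn : 2 ≤ n) (hm : 2 ≤ m) (A B : List ℂ)
    (hA : A.length = n) (hB : B.length = m) (hAq : IsGQS A) (hBq : IsGQS B) :
    ∀ k, 1 ≤ k → k ≤ n →
      IsGQS (boxcomp A B k) ∧ (boxcomp A B k).length = n + m - 2 := by
  obtain ⟨b, mid, c, rfl⟩ := two_decomp B (by omega)
  have hBq' : Mmat c * Mprod mid * Mmat b = -1 := by
    have h0 : Mprod (b :: (mid ++ [c])) = -1 := hBq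
    rwa [Mprod_cons, Mprod_append, Mprod_singleton] at h0
  have hmid : mid.length = m - 2 := by
    simp at hB; omega
  have hb0 : (b :: (mid ++ [c])).getD 0 0 = b := by simp
  have hmid0 : ((b :: (mid ++ [c])).drop 1).dropLast = mid := by simp
  have hc0 : (b :: (mid ++ [c])).getLastD 0 = c := by simp [List.getLastD]
  intro k hk1 hk2
  rcases eq_or_lt_of_le hk2 with rfl | hk3
  · -- case k = n (= A.length)
    obtain ⟨a, midA, d, rfl⟩ := two_decomp A (by omega)
    have hAq' : Mmat d * Mprod midA * Mmat a = -1 := by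
      have h0 : Mprod (a :: (midA ++ [d])) = -1 := hAq
      rwa [Mprod_cons, Mprod_append, Mprod_singleton] at h0
    have hbc : boxcomp (a :: (midA ++ [d])) (b :: (mid ++ [c])) k
        = (a + c) :: (midA ++ (d + b) :: mid) := by
      rw [boxcomp, if_neg (by omega), hb0, hmid0, hc0]
      simp [List.getLastD]
    constructor
    · show Mprod _ = -1
      rw [hbc, Mprod_cons, Mprod_append, Mprod_cons]
      exact end_key (Mprod mid) (Mprod midA) a b c d hAq' hBq'
    · rw [hbc]
      simp at hA ⊢
      omega
  · -- case 1 ≤ k < n = A.length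
    have hkA : k < A.length := by omega
    have hk1A : k - 1 < A.length := by omega
    set x := A.getD (k-1) 0 with hx
    set y := A.getD k 0 with hy
    set A₁ := A.take (k-1) with hA₁
    set A₂ := A.drop (k+1) with hA₂
    have hAdec : A = A₁ ++ x :: y :: A₂ := by
      have e : k - 1 + 1 = k := by omega
      rw [hx, hy, List.getD_eq_getElem A 0 hk1A, List.getD_eq_getElem A 0 hkA]
      conv_lhs => rw [← List.take_append_drop (k-1) A]
      rw [List.drop_eq_getElem_cons hk1A, e, List.drop_eq_getElem_cons hkA]
    have hAq' : Mprod A₂ * Mmat y * Mmat x * Mprod A₁ = -1 := by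
      have h0 : Mprod A = -1 := hAq
      rw [hAdec, Mprod_append, Mprod_cons, Mprod_cons] at h0
      exact h0
    have hbc : boxcomp A (b :: (mid ++ [c])) k
        = A₁ ++ (x + b) :: (mid ++ (c + y) :: A₂) := by
      rw [boxcomp, if_pos hkA, hb0, hmid0, hc0]
    constructor
    · show Mprod _ = -1
      rw [hbc, Mprod_append, Mprod_cons, Mprod_append, Mprod_cons]
      calc Mprod A₂ * Mmat (c + y) * Mprod mid * Mmat (x + b) * Mprod A₁
          = Mprod A₂ * (Mmat (c + y) * Mprod mid * Mmat (x + b)) * Mprod A₁ := by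
            noncomm_ring
        _ = Mprod A₂ * (Mmat y * Mmat x) * Mprod A₁ := by
            rw [middle_key (Mprod mid) b c x y hBq']
        _ = Mprod A₂ * Mmat y * Mmat x * Mprod A₁ := by noncomm_ring
        _ = -1 := hAq'
    · rw [hbc]
      have h1 : A₁.length = k - 1 := by
        rw [hA₁]; simp; omega
      have h2 : A₂.length = n - (k+1) := by
        rw [hA₂]; simp [hA]
      simp [h1, h2, hmid]
      omega
end

section
/- Let a = (a₁,…,aₙ) and b = (b₁,…,b_m) be two Id-quiddity sequences (of lengths n, m ≥ 2). Define, for 1 ≤ k ≤ n−1, a ∘ₖ b = (a₁,…,a_{k−1}, a_k+b₁−1, b₂,…,b_{m−1}, b_m−1, a_{k+1}−1, a_{k+2},…,aₙ), and a ∘ₙ b = (a₁−1, a₂,…,a_{n−1}, aₙ+b₁−1, b₂,…,b_{m−1}, b_m−1). Then for every k ∈ {1,…,n}, a ∘ₖ b is an Id-quiddity sequence of length n+m−1. -/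
/-- An `Id`-quiddity sequence: a tuple `(a₁,…,aₙ)` with
`M(aₙ)·M(aₙ₋₁)···M(a₁) = Id`. -/
def IsIdQS (A : List ℂ) : Prop := (A.reverse.map Mmat).prod = 1

/-- The product `a ∘ₖ b` for `Id`-quiddity sequences, with `1`-based index `k`.
For `1 ≤ k ≤ n-1` (i.e. `k < A.length`) it is
`(a₁,…,a_{k−1}, a_k+b₁−1, b₂,…,b_{m−1}, b_m−1, a_{k+1}−1, a_{k+2},…,aₙ)`,
and for `k = n` it is `(a₁−1, a₂,…,a_{n−1}, aₙ+b₁−1, b₂,…,b_{m−1}, b_m−1)`. -/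
noncomputable def idcomp (A B : List ℂ) (k : ℕ) : List ℂ :=
  if k < A.length then
    A.take (k - 1) ++ (A.getD (k - 1) 0 + B.getD 0 0 - 1) ::
      ((B.drop 1).dropLast ++ (B.getLastD 0 - 1) :: (A.getD k 0 - 1) :: A.drop (k + 1))
  else
    (A.getD 0 0 - 1) :: ((A.drop 1).dropLast ++ (A.getLastD 0 + B.getD 0 0 - 1) ::
      ((B.drop 1).dropLast ++ [B.getLastD 0 - 1]))

noncomputable def Minv (a : ℂ) : Matrix (Fin 2) (Fin 2) ℂ := !![0, 1; -1, a]

lemma M_Minv (a : ℂ) : Mmat a * Minv a = 1 := by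
  simp [Mmat, Minv, Matrix.mul_fin_two, Matrix.one_fin_two]

lemma Minv_M (a : ℂ) : Minv a * Mmat a = 1 := by
  simp [Mmat, Minv, Matrix.mul_fin_two, Matrix.one_fin_two]

lemma key1_s5 (x y u v : ℂ) :
    Mmat (x - 1) * Mmat (y - 1) * (Minv y * Minv u) * Mmat (v + u - 1) = Mmat x * Mmat v := by
  ext i j
  fin_cases i <;> fin_cases j <;>
    simp [Mmat, Minv, Matrix.mul_apply, Fin.sum_univ_two] <;> ring

lemma key2_s5 (x y u v : ℂ) :
    Mmat (y - 1) * (Minv y * Minv u) * Mmat (x + u - 1) * (Minv x * Minv v) * Mmat (v - 1) = 1 := by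
  ext i j
  fin_cases i <;> fin_cases j <;>
    simp [Mmat, Minv, Matrix.mul_apply, Fin.sum_univ_two, Matrix.one_apply] <;> ring

noncomputable def Pprod (L : List ℂ) : Matrix (Fin 2) (Fin 2) ℂ := (L.reverse.map Mmat).prod

lemma P_append (L1 L2 : List ℂ) : Pprod (L1 ++ L2) = Pprod L2 * Pprod L1 := by
  simp [Pprod, List.reverse_append]

lemma P_cons (a : ℂ) (L : List ℂ) : Pprod (a :: L) = Pprod L * Mmat a := by
  simp [Pprod]

lemma P_singleton (a : ℂ) : Pprod [a] = Mmat a := by simp [Pprod]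

lemma sandwich (y u : ℂ) (X : Matrix (Fin 2) (Fin 2) ℂ)
    (h : Mmat y * X * Mmat u = 1) : X = Minv y * Minv u := by
  calc X = (Minv y * Mmat y) * X * (Mmat u * Minv u) := by
        rw [Minv_M, M_Minv, one_mul, mul_one]
    _ = Minv y * (Mmat y * X * Mmat u) * Minv u := by noncomm_ring
    _ = Minv y * Minv u := by rw [h, mul_one]

lemma getLastD_of_ne_nil (l : List ℂ) (h : l ≠ []) : l.getLastD 0 = l.getLast h := by
  rw [List.getLastD_eq_getLast?, List.getLast?_eq_getLast h]; rfl

/-- If `a` and `b` are `Id`-quiddity sequences of lengths `n, m ≥ 2`, then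
`a ∘ₖ b` is an `Id`-quiddity sequence of length `n+m−1`, for every `k ∈ {1,…,n}`. -/
theorem idqs_closed_under_circ (n m : ℕ) (hn : 2 ≤ n) (hm : 2 ≤ m) (A B : List ℂ)
    (hA : A.length = n) (hB : B.length = m) (hAq : IsIdQS A) (hBq : IsIdQS B) :
    ∀ k, 1 ≤ k → k ≤ n →
      IsIdQS (idcomp A B k) ∧ (idcomp A B k).length = n + m - 1 := by
  intro k hk1 hk2
  have hPA : Pprod A = 1 := hAq
  have hPB : Pprod B = 1 := hBq
  -- decompose B
  obtain ⟨b0, t, rfl⟩ : ∃ b0 t, B = b0 :: t := by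
    cases B with
    | nil => simp at hB; omega
    | cons b0 t => exact ⟨b0, t, rfl⟩
  have hB' : t.length + 1 = m := by simpa using hB
  have ht : t ≠ [] := by
    intro h; subst h; simp at hB'; omega
  set bl := t.getLast ht with hbl
  have htdec : t.dropLast ++ [bl] = t := List.dropLast_append_getLast ht
  have hBlast : (b0 :: t).getLastD 0 = bl := by
    rw [getLastD_of_ne_nil _ (List.cons_ne_nil _ _), List.getLast_cons ht]
  have hPBmid : Pprod t.dropLast = Minv bl * Minv b0 := by
    apply sandwich
    have h1 : Pprod (b0 :: t) = Mmat bl * Pprod t.dropLast * Mmat b0 := by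
      conv_lhs => rw [← htdec]
      rw [P_cons, P_append, P_singleton]
    rw [← h1, hPB]
  rcases lt_or_ge k n with hkn | hkn
  · -- case k < n
    have hklt : k < A.length := by omega
    have hk1lt : k - 1 < A.length := by omega
    have hifpos : idcomp A (b0 :: t) k =
        A.take (k - 1) ++ (A.getD (k - 1) 0 + (b0 :: t).getD 0 0 - 1) ::
          (((b0 :: t).drop 1).dropLast ++ ((b0 :: t).getLastD 0 - 1) ::
            (A.getD k 0 - 1) :: A.drop (k + 1)) := by
      simp only [idcomp]; rw [if_pos hklt]
    constructor
    · show Pprod _ = 1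
      rw [hifpos, hBlast]
      have hgd1 : A.getD (k - 1) 0 = A[k - 1] := List.getD_eq_getElem A 0 hk1lt
      have hgd2 : A.getD k 0 = A[k] := List.getD_eq_getElem A 0 hklt
      have hgd0 : (b0 :: t).getD 0 0 = b0 := rfl
      have hdrop1 : (b0 :: t).drop 1 = t := rfl
      rw [hgd1, hgd2, hgd0, hdrop1]
      -- decompose A
      have hAdec : A = A.take (k - 1) ++ A[k - 1] :: A[k] :: A.drop (k + 1) := by
        have h1 : A.drop (k - 1) = A[k - 1] :: A.drop (k - 1 + 1) :=
          List.drop_eq_getElem_cons hk1lt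
        have h2 : k - 1 + 1 = k := by omega
        have h3 : A.drop k = A[k] :: A.drop (k + 1) := List.drop_eq_getElem_cons hklt
        conv_lhs => rw [← List.take_append_drop (k - 1) A]
        rw [h1, h2, h3]
      have hPA' : Pprod (A.drop (k + 1)) * (Mmat A[k] * Mmat A[k - 1]) *
          Pprod (A.take (k - 1)) = 1 := by
        conv_rhs => rw [← hPA, hAdec]
        rw [P_append, P_cons, P_cons]
        noncomm_ring
      rw [P_append, P_cons, P_append, P_cons, P_cons, hPBmid]
      calc _ = Pprod (A.drop (k + 1)) *
              (Mmat (A[k] - 1) * Mmat (bl - 1) * (Minv bl * Minv b0) *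
                Mmat (A[k - 1] + b0 - 1)) * Pprod (A.take (k - 1)) := by noncomm_ring
        _ = Pprod (A.drop (k + 1)) * (Mmat A[k] * Mmat A[k - 1]) *
              Pprod (A.take (k - 1)) := by rw [key1_s5]
        _ = 1 := hPA'
    · rw [hifpos]
      simp only [List.length_append, List.length_cons, List.length_take, List.length_dropLast,
        List.length_drop]
      omega
  · -- case k = n
    have hklt : ¬ k < A.length := by omega
    have hifneg : idcomp A (b0 :: t) k =
        (A.getD 0 0 - 1) :: ((A.drop 1).dropLast ++
          (A.getLastD 0 + (b0 :: t).getD 0 0 - 1) ::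
            (((b0 :: t).drop 1).dropLast ++ [(b0 :: t).getLastD 0 - 1])) := by
      simp only [idcomp]; rw [if_neg hklt]
    -- decompose A
    obtain ⟨a0, s, rfl⟩ : ∃ a0 s, A = a0 :: s := by
      cases A with
      | nil => simp at hA; omega
      | cons a0 s => exact ⟨a0, s, rfl⟩
    have hA' : s.length + 1 = n := by simpa using hA
    have hs : s ≠ [] := by
      intro h; subst h; simp at hA'; omega
    set al := s.getLast hs with hal
    have hsdec : s.dropLast ++ [al] = s := List.dropLast_append_getLast hs
    have hAlast : (a0 :: s).getLastD 0 = al := by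
      rw [getLastD_of_ne_nil _ (List.cons_ne_nil _ _), List.getLast_cons hs]
    have hPAmid : Pprod s.dropLast = Minv al * Minv a0 := by
      apply sandwich
      have h1 : Pprod (a0 :: s) = Mmat al * Pprod s.dropLast * Mmat a0 := by
        conv_lhs => rw [← hsdec]
        rw [P_cons, P_append, P_singleton]
      rw [← h1, hPA]
    constructor
    · show Pprod _ = 1
      rw [hifneg, hBlast, hAlast]
      have hgdA0 : (a0 :: s).getD 0 0 = a0 := rfl
      have hgdB0 : (b0 :: t).getD 0 0 = b0 := rfl
      have hdropA1 : (a0 :: s).drop 1 = s := rfl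
      have hdropB1 : (b0 :: t).drop 1 = t := rfl
      rw [hgdA0, hgdB0, hdropA1, hdropB1]
      rw [P_cons, P_append, P_cons, P_append, P_singleton, hPBmid, hPAmid]
      calc _ = Mmat (bl - 1) * (Minv bl * Minv b0) * Mmat (al + b0 - 1) *
              (Minv al * Minv a0) * Mmat (a0 - 1) := by noncomm_ring
        _ = 1 := key2_s5 al bl b0 a0
    · rw [hifneg]
      simp only [List.length_cons, List.length_append, List.length_dropLast, List.length_drop, List.length_nil]
      omega
end

section
/- Let (𝔞₁,…,𝔞ₙ) be a left matrix quiddity sequence of l×l complex matrices. Then for every i ∈ {1,…,n−1}, the tuple (𝔞₁,…,𝔞_{i−1}, 𝔞ᵢ+I, I, 𝔞_{i+1}+I, 𝔞_{i+2},…,𝔞ₙ) of length n+1 is also a left matrix quiddity sequence. -/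
/-- The 2l×2l block matrix `M(𝔞) = [[𝔞, −I], [I, O]]`. -/
noncomputable def Mblk {l : ℕ} (a : Matrix (Fin l) (Fin l) ℂ) :
    Matrix (Fin l ⊕ Fin l) (Fin l ⊕ Fin l) ℂ :=
  Matrix.fromBlocks a (-1) 1 0

/-- A left matrix quiddity sequence: a tuple `(𝔞₁,…,𝔞ₙ)` of l×l complex matrices
with `M(𝔞ₙ)·M(𝔞ₙ₋₁)···M(𝔞₁) = −Id`. -/
def IsLMQS {l : ℕ} (A : List (Matrix (Fin l) (Fin l) ℂ)) : Prop :=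
  (A.reverse.map Mblk).prod = -1

lemma Mblk_key {l : ℕ} (a b : Matrix (Fin l) (Fin l) ℂ) :
    Mblk (b + 1) * Mblk 1 * Mblk (a + 1) = Mblk b * Mblk a := by
  simp only [Mblk, Matrix.fromBlocks_multiply]
  have h1 : ((b + 1) * 1 + -1 * 1) * (a + 1) + ((b + 1) * -1 + -1 * 0) * 1
      = b * a + -1 * (1 : Matrix (Fin l) (Fin l) ℂ) := by noncomm_ring
  have h2 : ((b + 1) * 1 + -1 * 1) * -1 + ((b + 1) * -1 + -1 * 0) * 0
      = b * -1 + -1 * (0 : Matrix (Fin l) (Fin l) ℂ) := by noncomm_ring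
  have h3 : (1 * 1 + 0 * 1) * (a + 1) + (1 * -1 + 0 * 0) * 1
      = 1 * a + 0 * (1 : Matrix (Fin l) (Fin l) ℂ) := by noncomm_ring
  have h4 : (1 * 1 + 0 * 1) * -1 + (1 * -1 + 0 * 0) * 0
      = 1 * -1 + 0 * (0 : Matrix (Fin l) (Fin l) ℂ) := by noncomm_ring
  rw [h1, h2, h3, h4]

lemma Mblk_key' {l : ℕ} (a b : Matrix (Fin l) (Fin l) ℂ)
    (Y : Matrix (Fin l ⊕ Fin l) (Fin l ⊕ Fin l) ℂ) :
    Mblk (b + 1) * (Mblk 1 * (Mblk (a + 1) * Y)) = Mblk b * (Mblk a * Y) := by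
  rw [← mul_assoc, ← mul_assoc, Mblk_key, mul_assoc]

/-- If `(𝔞₁,…,𝔞ₙ)` is a left matrix quiddity sequence then, for `1 ≤ i ≤ n−1`,
`(𝔞₁,…,𝔞_{i−1}, 𝔞ᵢ+I, I, 𝔞_{i+1}+I, 𝔞_{i+2},…,𝔞ₙ)` is a left matrix
quiddity sequence of length `n+1`. -/
theorem lmqs_insert_one {l : ℕ} (n : ℕ) (A : List (Matrix (Fin l) (Fin l) ℂ))
    (hlen : A.length = n) (hA : IsLMQS A) :
    ∀ i, 1 ≤ i → i ≤ n - 1 →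
      IsLMQS (A.take (i - 1) ++ (A.getD (i - 1) 0 + 1) ::
        (1 : Matrix (Fin l) (Fin l) ℂ) :: (A.getD i 0 + 1) :: A.drop (i + 1)) ∧
      (A.take (i - 1) ++ (A.getD (i - 1) 0 + 1) ::
        (1 : Matrix (Fin l) (Fin l) ℂ) :: (A.getD i 0 + 1) :: A.drop (i + 1)).length
        = n + 1 := by
  intro i h1 h2
  have hn2 : 2 ≤ n := by omega
  have hi1 : i - 1 < A.length := by omega
  have hi : i < A.length := by omega
  have ha : A.getD (i - 1) 0 = A[i - 1] := List.getD_eq_getElem A 0 hi1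
  have hb : A.getD i 0 = A[i] := List.getD_eq_getElem A 0 hi
  have hii : i - 1 + 1 = i := by omega
  have hsplit : A = A.take (i - 1) ++ A[i - 1] :: A[i] :: A.drop (i + 1) := by
    conv_lhs => rw [← List.take_append_drop (i - 1) A,
      List.drop_eq_getElem_cons hi1]
    rw [hii, List.drop_eq_getElem_cons hi]
  constructor
  · unfold IsLMQS at hA ⊢
    rw [hsplit] at hA
    rw [ha, hb]
    simp only [List.reverse_append, List.reverse_cons, List.map_append, List.map_cons,
      List.prod_append, List.prod_cons, List.append_assoc, List.cons_append,
      List.nil_append, List.prod_nil, mul_one, mul_assoc] at hA ⊢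
    rw [Mblk_key' A[i-1] A[i]]
    exact hA
  · simp only [List.length_append, List.length_take, List.length_cons, List.length_drop]
    omega
end

section
/- Let (𝔠ₖ)_{k∈ℤ} be an n-periodic sequence of l×l complex matrices (𝔠_{k+n} = 𝔠ₖ for all k). Then every bi-infinite sequence (𝔲ₖ)_{k∈ℤ} of l×l complex matrices satisfying the recurrence 𝔲_{k+1} = 𝔠ₖ·𝔲ₖ − 𝔲_{k−1} for all k ∈ ℤ is n-antiperiodic (i.e. 𝔲_{k+n} = −𝔲ₖ for all k ∈ ℤ) if and only if (𝔠₁,…,𝔠ₙ) is a left matrix quiddity sequence. -/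
namespace APaux
variable {l : ℕ}

/-- Explicit inverse of `Mblk a`. -/
noncomputable def Nblk (a : Matrix (Fin l) (Fin l) ℂ) :
    Matrix (Fin l ⊕ Fin l) (Fin l ⊕ Fin l) ℂ :=
  Matrix.fromBlocks 0 1 (-1) a

lemma Nblk_mul (a : Matrix (Fin l) (Fin l) ℂ) : Nblk a * Mblk a = 1 := by
  simp [Nblk, Mblk, Matrix.fromBlocks_multiply, ← Matrix.fromBlocks_one]

lemma mul_Nblk (a : Matrix (Fin l) (Fin l) ℂ) : Mblk a * Nblk a = 1 := by
  simp [Nblk, Mblk, Matrix.fromBlocks_multiply, ← Matrix.fromBlocks_one]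

/-- The transfer matrix product `M(c (k+m-1)) ⋯ M(c (k+1)) M(c k)`. -/
noncomputable def Tm (c : ℤ → Matrix (Fin l) (Fin l) ℂ) :
    ℕ → ℤ → Matrix (Fin l ⊕ Fin l) (Fin l ⊕ Fin l) ℂ
  | 0, _ => 1
  | m+1, k => Mblk (c (k + m)) * Tm c m k

lemma Tm_succ' (c : ℤ → Matrix (Fin l) (Fin l) ℂ) (m : ℕ) (k : ℤ) :
    Tm c (m+1) k = Tm c m (k+1) * Mblk (c k) := by
  induction m generalizing k with
  | zero => simp [Tm]
  | succ m ih =>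
    have h1 : Tm c (m+2) k = Mblk (c (k + (m+1))) * Tm c (m+1) k := rfl
    rw [h1, ih]
    have h3 : Tm c (m+1) (k+1) = Mblk (c (k+1+m)) * Tm c m (k+1) := rfl
    rw [h3, show (k + ((m:ℤ)+1)) = k+1+m by ring, mul_assoc]

/-- The block column `[[x],[y]]` padded to a square matrix. -/
noncomputable def Vb (x y : Matrix (Fin l) (Fin l) ℂ) :
    Matrix (Fin l ⊕ Fin l) (Fin l ⊕ Fin l) ℂ :=
  Matrix.fromBlocks x 0 y 0

lemma V_step (c : ℤ → Matrix (Fin l) (Fin l) ℂ) (u : ℤ → Matrix (Fin l) (Fin l) ℂ)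
    (hu : ∀ k : ℤ, u (k + 1) = c k * u k - u (k - 1)) (j : ℤ) :
    Vb (u (j+1)) (u (j+1-1)) = Mblk (c j) * Vb (u j) (u (j-1)) := by
  simp [Vb, Mblk, Matrix.fromBlocks_multiply, hu j, sub_eq_add_neg]

lemma V_eq (c : ℤ → Matrix (Fin l) (Fin l) ℂ) (u : ℤ → Matrix (Fin l) (Fin l) ℂ)
    (hu : ∀ k : ℤ, u (k + 1) = c k * u k - u (k - 1)) (m : ℕ) (k : ℤ) :
    Vb (u (k+m)) (u (k+m-1)) = Tm c m k * Vb (u k) (u (k-1)) := by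
  induction m with
  | zero => simp [Tm]
  | succ m ih =>
    have h1 : Tm c (m+1) k = Mblk (c (k + m)) * Tm c m k := rfl
    have h2 : (k + ((m:ℕ):ℤ) + 1) = k + ((m+1 : ℕ) : ℤ) := by push_cast; ring
    rw [h1, mul_assoc, ← ih, ← V_step c u hu (k+m), h2]

lemma Tlist (c : ℤ → Matrix (Fin l) (Fin l) ℂ) (n : ℕ) :
    ((((List.range n).map fun i : ℕ => c (((i:ℕ) : ℤ) + 1)).reverse.map Mblk)).prod
      = Tm c n 1 := by
  induction n with
  | zero => simp [Tm]
  | succ n ih =>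
    rw [List.range_succ]
    simp only [List.map_append, List.reverse_append, List.map_cons, List.map_nil,
      List.reverse_cons, List.reverse_nil, List.nil_append, List.prod_cons,
      List.singleton_append, List.cons_append, List.prod_nil]
    rw [ih]
    have h : Tm c (n+1) 1 = Mblk (c (1 + n)) * Tm c n 1 := rfl
    rw [h, show ((1:ℤ) + (n:ℤ)) = (n:ℤ) + 1 by ring]

lemma Tall (c : ℤ → Matrix (Fin l) (Fin l) ℂ) (n : ℕ)
    (hper : ∀ k : ℤ, c (k + n) = c k) (h1 : Tm c n 1 = -1) :
    ∀ k : ℤ, Tm c n k = -1 := by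
  have shift : ∀ k : ℤ, Mblk (c k) * Tm c n k = Tm c n (k+1) * Mblk (c k) := by
    intro k
    have h1' : Tm c (n+1) k = Mblk (c (k + n)) * Tm c n k := rfl
    have h2 := Tm_succ' c n k
    rw [h1', hper k] at h2
    exact h2
  have fwd : ∀ k : ℤ, Tm c n k = -1 → Tm c n (k+1) = -1 := by
    intro k hk
    have := shift k
    rw [hk] at this
    have h2 := congrArg (· * Nblk (c k)) this
    simp only [mul_assoc, mul_Nblk, mul_one] at h2
    rw [← h2]
    simp [mul_Nblk]
  have bwd : ∀ k : ℤ, Tm c n (k+1) = -1 → Tm c n k = -1 := by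
    intro k hk
    have := shift k
    rw [hk] at this
    have h2 := congrArg (Nblk (c k) * ·) this
    simp only [← mul_assoc, Nblk_mul, one_mul] at h2
    rw [h2]
    simp [Nblk_mul, mul_assoc]
  have h0 : Tm c n 0 = -1 := bwd 0 (by simpa using h1)
  intro k
  induction k using Int.induction_on with
  | zero => exact h0
  | succ i ih => exact fwd i ih
  | pred i ih => exact bwd (-(i:ℤ)-1) (by simpa using ih)

noncomputable def Fs (c : ℤ → Matrix (Fin l) (Fin l) ℂ) (X Y : Matrix (Fin l) (Fin l) ℂ) :
    ℕ → Matrix (Fin l) (Fin l) ℂ × Matrix (Fin l) (Fin l) ℂ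
  | 0 => (Y, c 0 * Y - X)
  | m+1 => (c m * (Fs c X Y m).1 - (Fs c X Y m).2, (Fs c X Y m).1)

noncomputable def Gs (c : ℤ → Matrix (Fin l) (Fin l) ℂ) (X Y : Matrix (Fin l) (Fin l) ℂ) :
    ℕ → Matrix (Fin l) (Fin l) ℂ × Matrix (Fin l) (Fin l) ℂ
  | 0 => (Y, c 0 * Y - X)
  | m+1 => ((Gs c X Y m).2, c (-((m:ℤ)+1)) * (Gs c X Y m).2 - (Gs c X Y m).1)

noncomputable def hs (c : ℤ → Matrix (Fin l) (Fin l) ℂ) (X Y : Matrix (Fin l) (Fin l) ℂ) :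
    ℤ → Matrix (Fin l) (Fin l) ℂ × Matrix (Fin l) (Fin l) ℂ
  | Int.ofNat m => Fs c X Y m
  | Int.negSucc m => Gs c X Y (m+1)

lemma hs_step (c : ℤ → Matrix (Fin l) (Fin l) ℂ) (X Y : Matrix (Fin l) (Fin l) ℂ) (k : ℤ) :
    hs c X Y (k+1) = (c k * (hs c X Y k).1 - (hs c X Y k).2, (hs c X Y k).1) := by
  cases k with
  | ofNat m =>
    rw [show (Int.ofNat m + 1) = Int.ofNat (m+1) by simp]
    rfl
  | negSucc m =>
    cases m with
    | zero =>
      rw [show (Int.negSucc 0 + 1) = Int.ofNat 0 by decide]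
      show Fs c X Y 0 = _
      have hG : hs c X Y (Int.negSucc 0) = Gs c X Y 1 := rfl
      rw [hG]
      simp only [Fs, Gs]
      rw [show Int.negSucc 0 = -((0:ℤ)+1) from by decide]
      ext1 <;> simp [sub_sub_cancel]
    | succ m =>
      rw [show (Int.negSucc (m+1) + 1) = Int.negSucc m by
        rw [Int.negSucc_eq, Int.negSucc_eq]; push_cast; ring]
      show Gs c X Y (m+1) = _
      have hG : hs c X Y (Int.negSucc (m+1)) = Gs c X Y (m+2) := rfl
      rw [hG]
      have h2 : Gs c X Y (m+2) =
          ((Gs c X Y (m+1)).2,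
            c (-((((m+1):ℕ):ℤ)+1)) * (Gs c X Y (m+1)).2 - (Gs c X Y (m+1)).1) :=
        rfl
      rw [h2]
      rw [show Int.negSucc (m+1) = -((((m+1):ℕ):ℤ)+1) from Int.negSucc_eq (m+1)]
      ext1 <;> simp [sub_sub_cancel]

noncomputable def usol (c : ℤ → Matrix (Fin l) (Fin l) ℂ) (X Y : Matrix (Fin l) (Fin l) ℂ)
    (k : ℤ) : Matrix (Fin l) (Fin l) ℂ := (hs c X Y k).1

lemma usol_rec (c : ℤ → Matrix (Fin l) (Fin l) ℂ) (X Y : Matrix (Fin l) (Fin l) ℂ) :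
    ∀ k : ℤ, usol c X Y (k+1) = c k * usol c X Y k - usol c X Y (k-1) := by
  intro k
  have h1 := hs_step c X Y k
  have h2 := hs_step c X Y (k-1)
  rw [sub_add_cancel] at h2
  have h3 : (hs c X Y k).2 = (hs c X Y (k-1)).1 := by rw [h2]
  show (hs c X Y (k+1)).1 = _
  rw [h1]
  rw [usol, usol, ← h3]

lemma usol_one (c : ℤ → Matrix (Fin l) (Fin l) ℂ) (X Y : Matrix (Fin l) (Fin l) ℂ) :
    usol c X Y 1 = X := by
  show (Fs c X Y 1).1 = X
  simp [Fs, sub_sub_cancel]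

lemma usol_zero (c : ℤ → Matrix (Fin l) (Fin l) ℂ) (X Y : Matrix (Fin l) (Fin l) ℂ) :
    usol c X Y 0 = Y := rfl

end APaux

open APaux in
/-- For an `n`-periodic sequence `(𝔠ₖ)_{k∈ℤ}` of l×l matrices, every solution of
`𝔲_{k+1} = 𝔠ₖ𝔲ₖ − 𝔲_{k−1}` is `n`-antiperiodic if and only if `(𝔠₁,…,𝔠ₙ)` is a
left matrix quiddity sequence. -/
theorem antiperiodic_iff_lmqs {l : ℕ} (n : ℕ) (hn : 1 ≤ n)
    (c : ℤ → Matrix (Fin l) (Fin l) ℂ) (hper : ∀ k : ℤ, c (k + n) = c k) :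
    (∀ u : ℤ → Matrix (Fin l) (Fin l) ℂ,
        (∀ k : ℤ, u (k + 1) = c k * u k - u (k - 1)) →
        ∀ k : ℤ, u (k + n) = -u k) ↔
      IsLMQS ((List.range n).map fun i => c ((i : ℤ) + 1)) := by
  have hL : ((List.range n).map fun i => c ((i : ℤ) + 1))
      = (List.range n).map (fun i : ℕ => c (((i:ℕ):ℤ)+1)) := by
    simp only [bind_pure_comp, List.map_eq_map, List.map_map]
    rfl
  rw [IsLMQS, hL, Tlist]
  constructor
  · intro H
    have key : ∀ X Y : Matrix (Fin l) (Fin l) ℂ,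
        Tm c n 1 * Vb X Y = Vb (-X) (-Y) := by
      intro X Y
      have hrec := usol_rec c X Y
      have hV := V_eq c (usol c X Y) hrec n 1
      have e1 : usol c X Y (1 + (n:ℤ)) = -X := by
        rw [H _ hrec 1, usol_one]
      have e2 : usol c X Y (1 + (n:ℤ) - 1) = -Y := by
        rw [show (1:ℤ) + (n:ℤ) - 1 = 0 + (n:ℤ) by ring, H _ hrec 0, usol_zero]
      rw [e1, e2, show (1:ℤ) - 1 = 0 by ring, usol_one, usol_zero] at hV
      exact hV.symm
    have hA := key 1 0
    have hB := key 0 1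
    have hT : Tm c n 1 = Matrix.fromBlocks ((Tm c n 1).toBlocks₁₁) ((Tm c n 1).toBlocks₁₂)
        ((Tm c n 1).toBlocks₂₁) ((Tm c n 1).toBlocks₂₂) := (Matrix.fromBlocks_toBlocks _).symm
    rw [hT, Vb, Vb, Matrix.fromBlocks_multiply] at hA hB
    simp only [mul_one, mul_zero, add_zero, zero_add, neg_zero] at hA hB
    obtain ⟨hA1, -, hA2, -⟩ := Matrix.fromBlocks_inj.mp hA
    obtain ⟨hB1, -, hB2, -⟩ := Matrix.fromBlocks_inj.mp hB
    have h5 : -(1 : Matrix (Fin l ⊕ Fin l) (Fin l ⊕ Fin l) ℂ)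
        = Matrix.fromBlocks (-1) 0 0 (-1) := by
      rw [← Matrix.fromBlocks_one, Matrix.fromBlocks_neg, neg_zero]
    rw [hT, hA1, hA2, hB1, hB2]
    exact h5.symm
  · intro hq u hu k
    have hall := Tall c n hper hq
    have hV := V_eq c u hu n k
    rw [hall k, neg_one_mul, Vb, Vb, Matrix.fromBlocks_neg, neg_zero] at hV
    have := (Matrix.fromBlocks_inj.mp hV).1
    simpa using this
end

section
/- If (𝔞₁,…,𝔞ₙ) is a left matrix quiddity sequence, then (𝔞₁*,…,𝔞ₙ*) is a right matrix quiddity sequence, where 𝔞* denotes the entrywise complex conjugate of the matrix 𝔞. Conversely, if (𝔟₁,…,𝔟ₙ) is a right matrix quiddity sequence, then (𝔟₁*,…,𝔟ₙ*) is a left matrix quiddity sequence. -/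
/-- The 2l×2l block matrix `N(𝔟) = [[O, −I], [I, 𝔟]]`. -/
noncomputable def Nblk {l : ℕ} (b : Matrix (Fin l) (Fin l) ℂ) :
    Matrix (Fin l ⊕ Fin l) (Fin l ⊕ Fin l) ℂ :=
  Matrix.fromBlocks 0 (-1) 1 b

/-- A right matrix quiddity sequence: `N(𝔟₁)·N(𝔟₂)···N(𝔟ₙ) = −Id`. -/
def IsRMQS {l : ℕ} (B : List (Matrix (Fin l) (Fin l) ℂ)) : Prop :=
  (B.map Nblk).prod = -1

/-- The auxiliary block matrix `K = [[I, 0], [0, -I]]`. -/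
noncomputable def Kblk (l : ℕ) : Matrix (Fin l ⊕ Fin l) (Fin l ⊕ Fin l) ℂ :=
  Matrix.fromBlocks 1 0 0 (-1)

lemma Kblk_sq (l : ℕ) : Kblk l * Kblk l = 1 := by
  simp [Kblk, Matrix.fromBlocks_multiply, ← Matrix.fromBlocks_one]

lemma NKM (l : ℕ) (c : Matrix (Fin l) (Fin l) ℂ) :
    Nblk c * Kblk l * Mblk c = Kblk l := by
  simp [Nblk, Kblk, Mblk, Matrix.fromBlocks_multiply]

lemma key {l : ℕ} (C : List (Matrix (Fin l) (Fin l) ℂ)) :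
    (C.map Nblk).prod * Kblk l * (C.reverse.map Mblk).prod = Kblk l := by
  induction C with
  | nil => simpa using Kblk_sq l
  | cons c C ih =>
      simp only [List.reverse_cons, List.map_append, List.map_cons, List.map_nil,
        List.prod_append, List.prod_cons, List.prod_nil, mul_one]
      calc Nblk c * (C.map Nblk).prod * Kblk l * ((C.reverse.map Mblk).prod * Mblk c)
          = Nblk c * ((C.map Nblk).prod * Kblk l * (C.reverse.map Mblk).prod) * Mblk c := by
            noncomm_ring
        _ = Nblk c * Kblk l * Mblk c := by rw [ih]
        _ = Kblk l := NKM l c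

lemma conj_Mblk {l : ℕ} (a : Matrix (Fin l) (Fin l) ℂ) :
    (starRingEnd ℂ).mapMatrix (Mblk a) = Mblk (a.map (starRingEnd ℂ)) := by
  ext i j
  cases i <;> cases j <;>
    simp [Mblk, RingHom.mapMatrix_apply, Matrix.map_apply, Matrix.one_apply,
      apply_ite (starRingEnd ℂ)]

lemma conj_Nblk {l : ℕ} (a : Matrix (Fin l) (Fin l) ℂ) :
    (starRingEnd ℂ).mapMatrix (Nblk a) = Nblk (a.map (starRingEnd ℂ)) := by
  ext i j
  cases i <;> cases j <;>
    simp [Nblk, RingHom.mapMatrix_apply, Matrix.map_apply, Matrix.one_apply,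
      apply_ite (starRingEnd ℂ)]

/-- Entrywise complex conjugation turns left matrix quiddity sequences into right
matrix quiddity sequences, and conversely. -/
theorem lmqs_conj_rmqs {l : ℕ} (A : List (Matrix (Fin l) (Fin l) ℂ)) :
    (IsLMQS A → IsRMQS (A.map fun a => a.map (starRingEnd ℂ))) ∧
    (IsRMQS A → IsLMQS (A.map fun a => a.map (starRingEnd ℂ))) := by
  set f : Matrix (Fin l ⊕ Fin l) (Fin l ⊕ Fin l) ℂ →+* Matrix (Fin l ⊕ Fin l) (Fin l ⊕ Fin l) ℂ := (starRingEnd ℂ).mapMatrix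
  set C := A.map fun a => a.map (starRingEnd ℂ) with hC
  constructor
  · intro h
    unfold IsLMQS at h
    have h2 : (C.reverse.map Mblk).prod = -1 := by
      have := map_list_prod f (A.reverse.map Mblk)
      rw [h, map_neg, map_one, List.map_map] at this
      rw [hC, ← List.map_reverse, List.map_map]
      rw [show Mblk ∘ (fun a => a.map (starRingEnd ℂ)) = f ∘ Mblk from
        funext fun a => (conj_Mblk a).symm]
      exact this.symm
    have hk := key C
    rw [h2] at hk
    unfold IsRMQS
    have h3 := congrArg (fun X => X * -(Kblk l)) hk
    calc (C.map Nblk).prod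
        = (C.map Nblk).prod * Kblk l * -1 * -Kblk l := by
          rw [show (C.map Nblk).prod * Kblk l * -1 * -Kblk l
            = (C.map Nblk).prod * (Kblk l * Kblk l) by noncomm_ring, Kblk_sq, mul_one]
      _ = Kblk l * -Kblk l := h3
      _ = -1 := by rw [show Kblk l * -Kblk l = -(Kblk l * Kblk l) by noncomm_ring, Kblk_sq]
  · intro h
    unfold IsRMQS at h
    have h2 : (C.map Nblk).prod = -1 := by
      have := map_list_prod f (A.map Nblk)
      rw [h, map_neg, map_one, List.map_map] at this
      rw [hC, List.map_map]
      rw [show Nblk ∘ (fun a => a.map (starRingEnd ℂ)) = f ∘ Nblk from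
        funext fun a => (conj_Nblk a).symm]
      exact this.symm
    have hk := key C
    rw [h2] at hk
    unfold IsLMQS
    have h3 := congrArg (fun X => -(Kblk l) * X) hk
    calc (C.reverse.map Mblk).prod
        = -Kblk l * (-1 * Kblk l * (C.reverse.map Mblk).prod) := by
          rw [show -Kblk l * (-1 * Kblk l * (C.reverse.map Mblk).prod)
            = (Kblk l * Kblk l) * (C.reverse.map Mblk).prod by noncomm_ring, Kblk_sq, one_mul]
      _ = -Kblk l * Kblk l := h3
      _ = -1 := by rw [show -Kblk l * Kblk l = -(Kblk l * Kblk l) by noncomm_ring, Kblk_sq]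
end

section
/- Let (𝔞₁,𝔞₂,𝔞₃,𝔞₄,𝔞₅) be a left matrix quiddity sequence of length 5 with 𝔞₁ and 𝔞₃ invertible. Then 𝔞₁ and 𝔞₃ commute (𝔞₁𝔞₃ = 𝔞₃𝔞₁), and 𝔞₂ = 𝔞₁⁻¹(I + (𝔞₁+I)𝔞₃⁻¹), 𝔞₄ = (𝔞₁+I)𝔞₃⁻¹, and 𝔞₅ = 𝔞₁⁻¹(𝔞₃+I) (equivalently, when 𝔞₁+I is invertible, 𝔞₅ = (𝔞₁⁻¹+I)(𝔞₁+I)⁻¹(𝔞₃+I)). -/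
/-- Pure ring-theoretic core of the length-5 quiddity computation. -/
lemma lmqs_aux {R : Type*} [Ring R] (a₁ a₂ a₃ a₄ a₅ b₁ b₃ : R)
    (i1l : b₁ * a₁ = 1) (i1r : a₁ * b₁ = 1) (i3l : b₃ * a₃ = 1) (i3r : a₃ * b₃ = 1)
    (hA : a₃ * (a₂ * a₁) = a₁ + 1 + a₃) (hB : a₄ = a₂ * a₁ - 1)
    (hC : a₅ = a₃ * a₂ - 1) (hD : a₂ = a₄ * a₅ - 1) :
    a₁ * a₃ = a₃ * a₁ ∧ a₂ = b₁ * (1 + (a₁ + 1) * b₃) ∧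
    a₄ = (a₁ + 1) * b₃ ∧ a₅ = b₁ * (a₃ + 1) := by
  have ha2 : a₂ = b₃ * (a₁ + 1 + a₃) * b₁ := by
    have step : b₃ * (a₃ * (a₂ * a₁)) * b₁ = a₂ := by
      rw [← mul_assoc b₃ a₃, i3l, one_mul, mul_assoc, i1r, mul_one]
    rw [← step, hA]
  have ha4 : a₄ = b₃ * (a₁ + 1) := by
    rw [hB, ha2]
    have t : b₃ * (a₁ + 1 + a₃) * b₁ * a₁ = b₃ * (a₁ + 1 + a₃) := by
      rw [mul_assoc, i1l, mul_one]
    rw [t, show a₁ + 1 + a₃ = (a₁ + 1) + a₃ from rfl, mul_add, i3l, add_sub_cancel_right]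
  have ha5 : a₅ = (1 + a₃) * b₁ := by
    rw [hC, ha2]
    have t : a₃ * (b₃ * (a₁ + 1 + a₃) * b₁) = (a₁ + 1 + a₃) * b₁ := by
      rw [← mul_assoc, ← mul_assoc, i3r, one_mul]
    rw [t, show a₁ + 1 + a₃ = a₁ + (1 + a₃) from by rw [add_assoc], add_mul, i1r,
      add_sub_cancel_left]
  have hD' : b₃ * (a₁ + 1 + a₃) * b₁ = b₃ * (a₁ + 1) * ((1 + a₃) * b₁) - 1 := by
    rw [← ha2, ← ha4, ← ha5]; exact hD
  have comm : a₁ * a₃ = a₃ * a₁ := by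
    have key := congrArg (fun m => a₃ * m * a₁) hD'
    have lhs : a₃ * (b₃ * (a₁ + 1 + a₃) * b₁) * a₁ = a₁ + 1 + a₃ := by
      rw [← mul_assoc a₃, ← mul_assoc a₃, i3r, one_mul, mul_assoc, i1l, mul_one]
    have rhs : a₃ * (b₃ * (a₁ + 1) * ((1 + a₃) * b₁) - 1) * a₁ =
        (a₁ + 1) * (1 + a₃) - a₃ * a₁ := by
      rw [mul_sub, sub_mul, mul_one]
      congr 1
      rw [← mul_assoc a₃, ← mul_assoc a₃, i3r, one_mul, mul_assoc (a₁ + 1),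
        mul_assoc (1 + a₃), i1l, mul_one]
    rw [lhs, rhs] at key
    have : (a₁ + 1) * (1 + a₃) = a₁ + a₁ * a₃ + 1 + a₃ := by noncomm_ring
    rw [this] at key
    linear_combination (norm := noncomm_ring) -key
  have c1 : a₁ * b₃ = b₃ * a₁ := by
    calc a₁ * b₃ = b₃ * a₃ * (a₁ * b₃) := by rw [i3l, one_mul]
      _ = b₃ * (a₃ * a₁) * b₃ := by noncomm_ring
      _ = b₃ * (a₁ * a₃) * b₃ := by rw [comm]
      _ = b₃ * a₁ * (a₃ * b₃) := by noncomm_ring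
      _ = b₃ * a₁ := by rw [i3r, mul_one]
  have c3 : a₃ * b₁ = b₁ * a₃ := by
    calc a₃ * b₁ = b₁ * a₁ * (a₃ * b₁) := by rw [i1l, one_mul]
      _ = b₁ * (a₁ * a₃) * b₁ := by noncomm_ring
      _ = b₁ * (a₃ * a₁) * b₁ := by rw [comm]
      _ = b₁ * a₃ * (a₁ * b₁) := by noncomm_ring
      _ = b₁ * a₃ := by rw [i1r, mul_one]
  have cinv : b₃ * b₁ = b₁ * b₃ := by
    calc b₃ * b₁ = b₁ * a₁ * (b₃ * b₁) := by rw [i1l, one_mul]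
      _ = b₁ * (a₁ * b₃) * b₁ := by noncomm_ring
      _ = b₁ * (b₃ * a₁) * b₁ := by rw [c1]
      _ = b₁ * b₃ * (a₁ * b₁) := by noncomm_ring
      _ = b₁ * b₃ := by rw [i1r, mul_one]
  refine ⟨comm, ?_, ?_, ?_⟩
  · rw [ha2]
    have e1 : b₃ * (a₁ + 1 + a₃) * b₁ = b₃ * a₁ * b₁ + b₃ * b₁ + b₁ := by
      rw [mul_add, mul_add, i3l, add_mul, add_mul, one_mul, mul_one]
    have e2 : b₃ * a₁ * b₁ = b₃ := by
      rw [← c1, mul_assoc, cinv, ← mul_assoc, i1r, one_mul]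
    have e3 : b₁ * (1 + (a₁ + 1) * b₃) = b₃ + b₁ * b₃ + b₁ := by
      rw [mul_add, mul_one, add_mul, one_mul, mul_add, ← mul_assoc, i1l, one_mul]
      abel
    rw [e1, e2, e3, cinv]
  · rw [ha4, mul_add, add_mul, mul_one, one_mul, ← c1]
  · rw [ha5, add_mul, mul_add, one_mul, mul_one, c3, add_comm]

/-- Every left matrix quiddity sequence `(𝔞₁,…,𝔞₅)` of length 5 with `𝔞₁, 𝔞₃`
invertible satisfies: `𝔞₁` and `𝔞₃` commute, `𝔞₂ = 𝔞₁⁻¹(I+(𝔞₁+I)𝔞₃⁻¹)`,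
`𝔞₄ = (𝔞₁+I)𝔞₃⁻¹` and `𝔞₅ = 𝔞₁⁻¹(𝔞₃+I)`. -/
theorem lmqs_length_five_form {l : ℕ} (a₁ a₂ a₃ a₄ a₅ : Matrix (Fin l) (Fin l) ℂ)
    (h : IsLMQS [a₁, a₂, a₃, a₄, a₅]) (h1 : IsUnit a₁) (h3 : IsUnit a₃) :
    a₁ * a₃ = a₃ * a₁ ∧
    a₂ = a₁⁻¹ * (1 + (a₁ + 1) * a₃⁻¹) ∧
    a₄ = (a₁ + 1) * a₃⁻¹ ∧
    a₅ = a₁⁻¹ * (a₃ + 1) := by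
  have i1l : a₁⁻¹ * a₁ = 1 := Matrix.nonsing_inv_mul a₁ ((Matrix.isUnit_iff_isUnit_det a₁).mp h1)
  have i1r : a₁ * a₁⁻¹ = 1 := Matrix.mul_nonsing_inv a₁ ((Matrix.isUnit_iff_isUnit_det a₁).mp h1)
  have i3l : a₃⁻¹ * a₃ = 1 := Matrix.nonsing_inv_mul a₃ ((Matrix.isUnit_iff_isUnit_det a₃).mp h3)
  have i3r : a₃ * a₃⁻¹ = 1 := Matrix.mul_nonsing_inv a₃ ((Matrix.isUnit_iff_isUnit_det a₃).mp h3)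
  unfold IsLMQS at h
  simp only [List.reverse_cons, List.reverse_nil, List.nil_append, List.cons_append,
    List.map_cons, List.map_nil, List.prod_cons, List.prod_nil, mul_one, Mblk,
    Matrix.fromBlocks_multiply] at h
  rw [show (-1 : Matrix (Fin l ⊕ Fin l) (Fin l ⊕ Fin l) ℂ) = Matrix.fromBlocks (-1) 0 0 (-1) by
    rw [← Matrix.fromBlocks_one, Matrix.fromBlocks_neg]; simp] at h
  have e11 := congrArg Matrix.toBlocks₁₁ h
  have e12 := congrArg Matrix.toBlocks₁₂ h
  have e21 := congrArg Matrix.toBlocks₂₁ h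
  have e22 := congrArg Matrix.toBlocks₂₂ h
  simp only [Matrix.toBlocks_fromBlocks₁₁, Matrix.toBlocks_fromBlocks₁₂,
    Matrix.toBlocks_fromBlocks₂₁, Matrix.toBlocks_fromBlocks₂₂] at e11 e12 e21 e22
  clear h
  have E1 : a₅ * (a₄ * (a₃ * (a₂ * a₁ - 1) - a₁) - (a₂ * a₁ - 1)) -
      (a₃ * (a₂ * a₁ - 1) - a₁) = -1 := by
    rw [← e11]; noncomm_ring
  have E2 : a₅ * (a₄ * (1 - a₃ * a₂) + a₂) + (a₃ * a₂ - 1) = 0 := by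
    rw [← e12]; noncomm_ring
  have E3 : a₄ * (a₃ * (a₂ * a₁ - 1) - a₁) - (a₂ * a₁ - 1) = 0 := by
    rw [← e21]; noncomm_ring
  have E4 : a₄ * (1 - a₃ * a₂) + a₂ = -1 := by
    rw [← e22]; noncomm_ring
  clear e11 e12 e21 e22
  have Y : a₃ * (a₂ * a₁ - 1) - a₁ = 1 := by
    have t := E1
    rw [E3] at t
    linear_combination (norm := noncomm_ring) -t
  have hB : a₄ = a₂ * a₁ - 1 := by
    have t := E3
    rw [Y] at t
    linear_combination (norm := noncomm_ring) t
  have hC : a₅ = a₃ * a₂ - 1 := by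
    have t := E2
    rw [E4] at t
    linear_combination (norm := noncomm_ring) -t
  have hD : a₂ = a₄ * a₅ - 1 := by
    have h4 : a₄ * (1 - a₃ * a₂) = -1 - a₂ := by linear_combination (norm := noncomm_ring) E4
    have t : 1 - a₃ * a₂ = -a₅ := by linear_combination (norm := noncomm_ring) hC
    rw [t] at h4
    have t2 : a₄ * a₅ = 1 + a₂ := by linear_combination (norm := noncomm_ring) -h4
    linear_combination (norm := noncomm_ring) -t2
  have hA : a₃ * (a₂ * a₁) = a₁ + 1 + a₃ := by
    linear_combination (norm := noncomm_ring) Y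
  exact lmqs_aux a₁ a₂ a₃ a₄ a₅ a₁⁻¹ a₃⁻¹ i1l i1r i3l i3r hA hB hC hD
end

section
/- Let (𝔭₁,…,𝔭ₙ; 𝔮₁,…,𝔮ₙ) be a left matrix quiddity bi-sequence of length n. Then for every k ∈ {1,…,n−1}, the pair of tuples (𝔭₁,…,𝔭_{k−1}, 𝔭ₖ+I, I, 𝔭_{k+1}−𝔮_{k+1}, 𝔭_{k+2},…,𝔭ₙ; 𝔮₁,…,𝔮_{k−1}, 𝔮ₖ, −I, 𝔮_{k+1}, 𝔮_{k+2},…,𝔮ₙ) is a left matrix quiddity bi-sequence of length n+1. -/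
/-- The 2l×2l block matrix `M(𝔭;𝔮) = [[𝔭, 𝔮], [I, O]]`. -/
noncomputable def Mb {l : ℕ} (p q : Matrix (Fin l) (Fin l) ℂ) :
    Matrix (Fin l ⊕ Fin l) (Fin l ⊕ Fin l) ℂ :=
  Matrix.fromBlocks p q 1 0

/-- A left matrix quiddity bi-sequence: a pair of tuples
`(𝔭₁,…,𝔭ₙ; 𝔮₁,…,𝔮ₙ)` with `M(𝔭ₙ;𝔮ₙ)·M(𝔭ₙ₋₁;𝔮ₙ₋₁)···M(𝔭₁;𝔮₁) = −Id`. -/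
def IsLMQB {l : ℕ} (P Q : List (Matrix (Fin l) (Fin l) ℂ)) : Prop :=
  P.length = Q.length ∧ (((P.zip Q).reverse.map fun x => Mb x.1 x.2).prod = -1)

lemma key_s13 {l : ℕ} (a b c d : Matrix (Fin l) (Fin l) ℂ) :
    Mb (b - d) d * (Mb 1 (-1) * Mb (a + 1) c) = Mb b d * Mb a c := by
  simp only [Mb, Matrix.fromBlocks_multiply]
  rw [Matrix.fromBlocks_inj]
  refine ⟨by noncomm_ring, ?_, by noncomm_ring, by noncomm_ring⟩
  simp only [mul_zero, one_mul, neg_mul, add_zero, mul_neg, neg_zero]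
  noncomm_ring

/-- From a left matrix quiddity bi-sequence of length `n`, for each `1 ≤ k ≤ n−1`
one obtains a left matrix quiddity bi-sequence of length `n+1`:
`(𝔭₁,…,𝔭_{k−1}, 𝔭ₖ+I, I, 𝔭_{k+1}−𝔮_{k+1}, 𝔭_{k+2},…,𝔭ₙ;`
` 𝔮₁,…,𝔮_{k−1}, 𝔮ₖ, −I, 𝔮_{k+1}, 𝔮_{k+2},…,𝔮ₙ)`. -/
theorem lmqb_insert {l : ℕ} (n : ℕ) (P Q : List (Matrix (Fin l) (Fin l) ℂ))
    (hP : P.length = n) (hQ : Q.length = n) (h : IsLMQB P Q) :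
    ∀ k, 1 ≤ k → k ≤ n - 1 →
      ∀ P' Q' : List (Matrix (Fin l) (Fin l) ℂ),
        P' = P.take (k - 1) ++ (P.getD (k - 1) 0 + 1) ::
          (1 : Matrix (Fin l) (Fin l) ℂ) ::
          (P.getD k 0 - Q.getD k 0) :: P.drop (k + 1) →
        Q' = Q.take (k - 1) ++ Q.getD (k - 1) 0 ::
          (-1 : Matrix (Fin l) (Fin l) ℂ) :: Q.getD k 0 :: Q.drop (k + 1) →
        IsLMQB P' Q' ∧ P'.length = n + 1 ∧ Q'.length = n + 1 := by
  intro k hk1 hk2 P' Q' hP' hQ'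
  obtain ⟨-, hprod⟩ := h
  have hkP : k < P.length := by omega
  have hkQ : k < Q.length := by omega
  have hk1P : k - 1 < P.length := by omega
  have hk1Q : k - 1 < Q.length := by omega
  have hPdec : P = P.take (k - 1) ++ P.getD (k - 1) 0 :: P.getD k 0 :: P.drop (k + 1) := by
    conv_lhs => rw [← List.take_append_drop (k - 1) P]
    rw [List.drop_eq_getElem_cons hk1P, ← List.getD_eq_getElem P 0 hk1P]
    have hkk : k - 1 + 1 = k := by omega
    rw [hkk, List.drop_eq_getElem_cons hkP, ← List.getD_eq_getElem P 0 hkP]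
  have hQdec : Q = Q.take (k - 1) ++ Q.getD (k - 1) 0 :: Q.getD k 0 :: Q.drop (k + 1) := by
    conv_lhs => rw [← List.take_append_drop (k - 1) Q]
    rw [List.drop_eq_getElem_cons hk1Q, ← List.getD_eq_getElem Q 0 hk1Q]
    have hkk : k - 1 + 1 = k := by omega
    rw [hkk, List.drop_eq_getElem_cons hkQ, ← List.getD_eq_getElem Q 0 hkQ]
  set a := P.getD (k - 1) 0 with ha
  set b := P.getD k 0 with hb
  set c := Q.getD (k - 1) 0 with hc
  set d := Q.getD k 0 with hd
  have hlt : (P.take (k - 1)).length = (Q.take (k - 1)).length := by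
    simp [List.length_take]; omega
  have hlenP' : P'.length = n + 1 := by
    subst hP'; simp [List.length_take, List.length_drop]; omega
  have hlenQ' : Q'.length = n + 1 := by
    subst hQ'; simp [List.length_take, List.length_drop]; omega
  refine ⟨⟨by omega, ?_⟩, hlenP', hlenQ'⟩
  rw [hP', hQ', List.zip_append hlt]
  conv_rhs => rw [← hprod]
  conv_rhs => rw [hPdec, hQdec]
  rw [List.zip_append hlt]
  simp only [List.zip_cons_cons, List.reverse_append, List.reverse_cons,
    List.map_append, List.prod_append, List.map_cons, List.prod_cons,
    List.map_nil, List.prod_nil, List.append_assoc, List.nil_append,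
    List.cons_append, mul_one]
  rw [← mul_assoc (Mb 1 (-1)) (Mb (a + 1) c), ← mul_assoc (Mb (b - d) d), key_s13,
    mul_assoc]
end

section
/- Let 𝔞₁,…,𝔞ₘ be invertible l×l complex matrices and let 𝔔ₘ be the ml×ml block tridiagonal matrix whose diagonal blocks, from top-left to bottom-right, are 𝔞ₘ, 𝔞ₘ₋₁, …, 𝔞₁, whose blocks immediately above and below the diagonal all equal the l×l identity matrix I, and whose remaining blocks are zero (with 𝔔₁ = 𝔞₁). Then det(𝔔ₘ) = det(𝔭ₘ(𝔞₁,…,𝔞ₘ)) for all m ≥ 1. -/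
/-- Shifted left matrix signed Chebyshev polynomials: `cheb a (j+1)` is the
polynomial `𝔭ⱼ(a₁,…,aⱼ)`, with `cheb a 0 = 𝔭₋₁ = O` and `cheb a 1 = 𝔭₀ = I`,
and `𝔭ₘ(𝔞₁,…,𝔞ₘ) = 𝔞ₘ·𝔭ₘ₋₁(𝔞₁,…,𝔞ₘ₋₁) − 𝔭ₘ₋₂(𝔞₁,…,𝔞ₘ₋₂)`. -/
noncomputable def cheb {l : ℕ} (a : ℕ → Matrix (Fin l) (Fin l) ℂ) :
    ℕ → Matrix (Fin l) (Fin l) ℂ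
  | 0 => 0
  | 1 => 1
  | (k + 2) => a (k + 1) * cheb a (k + 1) - cheb a k

/-- The ml×ml block tridiagonal matrix `𝔔ₘ` with diagonal blocks
`𝔞ₘ, 𝔞ₘ₋₁, …, 𝔞₁` (from top-left to bottom-right), identity blocks immediately
above and below the diagonal, and zero blocks elsewhere. -/
noncomputable def Qtri (m l : ℕ) (a : ℕ → Matrix (Fin l) (Fin l) ℂ) :
    Matrix (Fin m × Fin l) (Fin m × Fin l) ℂ :=
  fun p q =>
    if p.1 = q.1 then a (m - (p.1 : ℕ)) p.2 q.2
    else if (p.1 : ℕ) + 1 = (q.1 : ℕ) ∨ (q.1 : ℕ) + 1 = (p.1 : ℕ) then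
      (if p.2 = q.2 then 1 else 0)
    else 0

open Matrix Polynomial

/-- General-ring version of `cheb`. -/
noncomputable def chebR {R : Type} [CommRing R] {l : ℕ}
    (a : ℕ → Matrix (Fin l) (Fin l) R) :
    ℕ → Matrix (Fin l) (Fin l) R
  | 0 => 0
  | 1 => 1
  | (k + 2) => a (k + 1) * chebR a (k + 1) - chebR a k

/-- General-ring version of `Qtri`. -/
noncomputable def QtriR {R : Type} [CommRing R] (m l : ℕ)
    (a : ℕ → Matrix (Fin l) (Fin l) R) :
    Matrix (Fin m × Fin l) (Fin m × Fin l) R :=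
  fun p q =>
    if p.1 = q.1 then a (m - (p.1 : ℕ)) p.2 q.2
    else if (p.1 : ℕ) + 1 = (q.1 : ℕ) ∨ (q.1 : ℕ) + 1 = (p.1 : ℕ) then
      (if p.2 = q.2 then 1 else 0)
    else 0

lemma cheb_eq_chebR {l : ℕ} (a : ℕ → Matrix (Fin l) (Fin l) ℂ) :
    ∀ n, cheb a n = chebR a n
  | 0 => by simp [cheb, chebR]
  | 1 => by simp [cheb, chebR]
  | (k + 2) => by
      rw [cheb, chebR, cheb_eq_chebR a (k + 1), cheb_eq_chebR a k]

lemma Qtri_eq_QtriR (m l : ℕ) (a : ℕ → Matrix (Fin l) (Fin l) ℂ) :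
    Qtri m l a = QtriR m l a := rfl

lemma QtriR_map {R S : Type} [CommRing R] [CommRing S] (f : R →+* S) (m l : ℕ)
    (a : ℕ → Matrix (Fin l) (Fin l) R) :
    (QtriR m l a).map f = QtriR m l (fun k => (a k).map f) := by
  ext p q
  simp only [Matrix.map_apply, QtriR]
  split_ifs <;> simp

lemma chebR_map {R S : Type} [CommRing R] [CommRing S] (f : R →+* S) {l : ℕ}
    (a : ℕ → Matrix (Fin l) (Fin l) R) :
    ∀ n, (chebR a n).map f = chebR (fun k => (a k).map f) n
  | 0 => by simp only [chebR]; exact Matrix.map_zero _ (map_zero f)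
  | 1 => by simp only [chebR]; exact Matrix.map_one _ (map_zero f) (map_one f)
  | (k + 2) => by
      rw [chebR, chebR]
      rw [Matrix.map_sub _ (map_sub f), Matrix.map_mul]
      rw [chebR_map f a (k + 1), chebR_map f a k]

/-- The splitting equivalence for peeling off the top-left block. -/
def splitEquiv (n l : ℕ) : (Fin l ⊕ (Fin (n + 1) × Fin l)) ≃ (Fin (n + 2) × Fin l) where
  toFun := Sum.elim (fun j => (0, j)) (fun p => (p.1.succ, p.2))
  invFun := fun p =>
    if h : (p.1 : ℕ) = 0 then Sum.inl p.2
    else Sum.inr (⟨(p.1 : ℕ) - 1, by omega⟩, p.2)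
  left_inv := by
    rintro (j | ⟨i, j⟩)
    · simp
    · rw [Sum.elim_inr]
      simp only [Sum.elim_inr, Fin.val_succ]
      rw [dif_neg (by omega)]
      simp
  right_inv := by
    rintro ⟨i, j⟩
    dsimp only
    by_cases h : (i : ℕ) = 0
    · rw [dif_pos h]
      simp only [Sum.elim_inl]
      ext <;> simp [Fin.ext_iff, h.symm] <;> omega
    · rw [dif_neg h]
      simp only [Sum.elim_inr]
      ext <;> simp [Fin.ext_iff] <;> omega

/-- The induction claim: determinant of the block tridiagonal matrix with the
top-left block replaced by `X`. Step for invertible `X` via Schur complement. -/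
lemma step_unit (l n : ℕ) (a : ℕ → Matrix (Fin l) (Fin l) ℂ)
    (X : Matrix (Fin l) (Fin l) ℂ) (hX : IsUnit X)
    (IH : ∀ (a : ℕ → Matrix (Fin l) (Fin l) ℂ) (X : Matrix (Fin l) (Fin l) ℂ),
      (Qtri (n + 1) l (Function.update a (n + 1) X)).det
        = (X * cheb a (n + 1) - cheb a n).det) :
    (Qtri (n + 2) l (Function.update a (n + 2) X)).det
      = (X * cheb a (n + 2) - cheb a (n + 1)).det := by
  haveI : Invertible X := hX.nonempty_invertible.some
  set a' := Function.update a (n + 2) X with ha'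
  set B : Matrix (Fin l) (Fin (n + 1) × Fin l) ℂ :=
    fun j p => if (p.1 : ℕ) = 0 ∧ j = p.2 then 1 else 0 with hB
  set C : Matrix (Fin (n + 1) × Fin l) (Fin l) ℂ :=
    fun p j => if (p.1 : ℕ) = 0 ∧ p.2 = j then 1 else 0 with hC
  have hsub : (Qtri (n + 2) l a').submatrix (splitEquiv n l) (splitEquiv n l)
      = Matrix.fromBlocks X B C (Qtri (n + 1) l a) := by
    ext pq rs
    rcases pq with (j | ⟨i, j⟩) <;> rcases rs with (j' | ⟨i', j'⟩)
    · -- top-left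
      have h0 : ((n:ℕ) + 2) - ((0 : Fin (n + 2)) : ℕ) = n + 2 := by simp
      simp [splitEquiv, Qtri, ha', h0, Function.update_self]
    · -- top-right
      simp only [Matrix.submatrix_apply, splitEquiv, Equiv.coe_fn_mk, Sum.elim_inl,
        Sum.elim_inr, Matrix.fromBlocks_apply₁₂]
      simp only [Qtri]
      have h0 : ((0 : Fin (n + 2)) : ℕ) = 0 := rfl
      by_cases hi' : (i' : ℕ) = 0
      · rw [if_neg (by simp only [Fin.ext_iff, Fin.val_zero, Fin.val_succ]; omega),
          if_pos (by simp only [Fin.val_zero, Fin.val_succ]; omega)]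
        simp [hi', hB, hC, -Fin.val_eq_zero_iff]
      · rw [if_neg (by simp only [Fin.ext_iff, Fin.val_zero, Fin.val_succ]; omega),
          if_neg (by simp only [Fin.val_zero, Fin.val_succ]; omega)]
        simp [hi', hB, hC, -Fin.val_eq_zero_iff]
    · -- bottom-left
      simp only [Matrix.submatrix_apply, splitEquiv, Equiv.coe_fn_mk, Sum.elim_inl,
        Sum.elim_inr, Matrix.fromBlocks_apply₂₁]
      simp only [Qtri]
      by_cases hi : (i : ℕ) = 0
      · rw [if_neg (by simp only [Fin.ext_iff, Fin.val_zero, Fin.val_succ]; omega),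
          if_pos (by simp only [Fin.val_zero, Fin.val_succ]; omega)]
        simp [hi, hB, hC, -Fin.val_eq_zero_iff]
      · rw [if_neg (by simp only [Fin.ext_iff, Fin.val_zero, Fin.val_succ]; omega),
          if_neg (by simp only [Fin.val_zero, Fin.val_succ]; omega)]
        simp [hi, hB, hC, -Fin.val_eq_zero_iff]
    · -- bottom-right
      simp only [Matrix.submatrix_apply, splitEquiv, Equiv.coe_fn_mk,
        Sum.elim_inr, Matrix.fromBlocks_apply₂₂]
      simp only [Qtri]
      by_cases hii : i = i'
      · subst hii
        rw [if_pos rfl, if_pos rfl]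
        have h1 : (n + 2) - ((i.succ : Fin (n + 2)) : ℕ) = (n + 1) - (i : ℕ) := by
          simp only [Fin.val_succ]; omega
        rw [h1, ha', Function.update_of_ne (by omega)]
      · have h1 : i.succ ≠ i'.succ := fun h => hii (Fin.succ_injective _ h)
        rw [if_neg h1, if_neg hii]
        have h2 : ((i.succ : ℕ) + 1 = (i'.succ : ℕ) ∨ (i'.succ : ℕ) + 1 = (i.succ : ℕ))
            ↔ ((i : ℕ) + 1 = (i' : ℕ) ∨ (i' : ℕ) + 1 = (i : ℕ)) := by
          simp only [Fin.val_succ]; omega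
        rw [if_congr h2 rfl rfl]
  have hCB : ∀ (M : Matrix (Fin l) (Fin l) ℂ) (i i' : Fin (n + 1)) (j j' : Fin l),
      (C * M * B) (i, j) (i', j')
        = if (i : ℕ) = 0 ∧ (i' : ℕ) = 0 then M j j' else 0 := by
    intro M i i' j j'
    simp only [Matrix.mul_apply]
    by_cases hi : (i : ℕ) = 0
    · by_cases hi' : (i' : ℕ) = 0
      · simp [Matrix.mul_apply, hB, hC, hi, hi', ite_and, ite_mul, mul_ite,
          Finset.sum_ite_eq, Finset.sum_ite_eq', -Fin.val_eq_zero_iff]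
      · simp [Matrix.mul_apply, hB, hC, hi, hi', ite_and, ite_mul, mul_ite, -Fin.val_eq_zero_iff]
    · simp [Matrix.mul_apply, hB, hC, hi, ite_and, ite_mul, mul_ite, -Fin.val_eq_zero_iff]
  have hS : Qtri (n + 1) l a - C * ⅟X * B
      = Qtri (n + 1) l (Function.update a (n + 1) (a (n + 1) - ⅟X)) := by
    ext ⟨i, j⟩ ⟨i', j'⟩
    rw [Matrix.sub_apply, hCB]
    by_cases hii : i = i'
    · subst hii
      by_cases hi : (i : ℕ) = 0
      · have h1 : (n + 1) - (i : ℕ) = n + 1 := by omega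
        simp [Qtri, hi, h1, Function.update_self, Matrix.sub_apply, -Fin.val_eq_zero_iff]
      · have h1 : (n + 1) - (i : ℕ) ≠ n + 1 := by omega
        simp [Qtri, hi, Function.update_of_ne h1, -Fin.val_eq_zero_iff]
    · have hne : ¬((i : ℕ) = 0 ∧ (i' : ℕ) = 0) := by
        rintro ⟨h1, h2⟩; exact hii (Fin.ext (by omega))
      simp [Qtri, hii, hne, -Fin.val_eq_zero_iff]
  calc (Qtri (n + 2) l a').det
      = ((Qtri (n + 2) l a').submatrix (splitEquiv n l) (splitEquiv n l)).det :=
        (Matrix.det_submatrix_equiv_self _ _).symm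
    _ = (Matrix.fromBlocks X B C (Qtri (n + 1) l a)).det := by rw [hsub]
    _ = X.det * (Qtri (n + 1) l a - C * ⅟X * B).det := Matrix.det_fromBlocks₁₁ _ _ _ _
    _ = X.det * ((a (n + 1) - ⅟X) * cheb a (n + 1) - cheb a n).det := by
        rw [hS, IH a (a (n + 1) - ⅟X)]
    _ = (X * ((a (n + 1) - ⅟X) * cheb a (n + 1) - cheb a n)).det := by
        rw [Matrix.det_mul]
    _ = (X * cheb a (n + 2) - cheb a (n + 1)).det := by
        congr 1
        have hXX : X * ⅟X = 1 := mul_invOf_self X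
        have hc : cheb a (n + 2) = a (n + 1) * cheb a (n + 1) - cheb a n := rfl
        rw [hc]
        calc X * ((a (n + 1) - ⅟X) * cheb a (n + 1) - cheb a n)
            = X * a (n + 1) * cheb a (n + 1) - (X * ⅟X) * cheb a (n + 1)
              - X * cheb a n := by noncomm_ring
          _ = X * (a (n + 1) * cheb a (n + 1) - cheb a n) - cheb a (n + 1) := by
              rw [hXX]; noncomm_ring

lemma claim (l : ℕ) : ∀ (n : ℕ) (a : ℕ → Matrix (Fin l) (Fin l) ℂ)
    (X : Matrix (Fin l) (Fin l) ℂ),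
    (Qtri (n + 1) l (Function.update a (n + 1) X)).det
      = (X * cheb a (n + 1) - cheb a n).det := by
  intro n
  induction n with
  | zero =>
    intro a X
    have hR : X * cheb a 1 - cheb a 0 = X := by
      have h1 : cheb a 1 = 1 := rfl
      have h0 : cheb a 0 = 0 := rfl
      rw [h1, h0, mul_one, sub_zero]
    let e : Fin l ≃ Fin 1 × Fin l :=
      ⟨fun j => (0, j), fun p => p.2, fun j => rfl,
        fun p => by
          obtain ⟨i, j⟩ := p
          have hi : i = 0 := Subsingleton.elim i 0
          subst hi; rfl⟩
    have hsub : (Qtri 1 l (Function.update a 1 X)).submatrix e e = X := by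
      ext j j'
      show Qtri 1 l (Function.update a 1 X) (0, j) (0, j') = X j j'
      simp [Qtri, Function.update_self]
    rw [hR, ← Matrix.det_submatrix_equiv_self e, hsub]
  | succ n ih =>
    intro a X
    classical
    set aP : ℕ → Matrix (Fin l) (Fin l) ℂ[X] := fun k => (a k).map Polynomial.C with haP
    set Y : Matrix (Fin l) (Fin l) ℂ[X] :=
      X.map Polynomial.C + (Polynomial.X : ℂ[X]) • 1 with hY
    set P : ℂ[X] :=
      (QtriR (n + 2) l (Function.update aP (n + 2) Y)).det
        - (Y * chebR aP (n + 2) - chebR aP (n + 1)).det with hP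
    have hmapak : ∀ z : ℂ, ∀ k, (aP k).map (Polynomial.eval z) = a k := by
      intro z k; ext i j; simp [haP, Matrix.map_apply]
    have hmapY : ∀ z : ℂ, Y.map (Polynomial.eval z) = X + z • 1 := by
      intro z; ext i j
      simp [hY, Matrix.map_apply, Matrix.add_apply, Matrix.smul_apply,
        Matrix.one_apply, apply_ite (Polynomial.eval z), smul_eq_mul]
    have hupdate : ∀ z : ℂ,
        (fun k => ((Function.update aP (n + 2) Y) k).map (Polynomial.eval z))
          = Function.update a (n + 2) (X + z • 1) := by
      intro z; funext k
      by_cases hk : k = n + 2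
      · subst hk; simp only [Function.update_self]; exact hmapY z
      · simp only [Function.update_of_ne hk]; exact hmapak z k
    have hev : ∀ z : ℂ, P.eval z
        = (Qtri (n + 2) l (Function.update a (n + 2) (X + z • 1))).det
          - ((X + z • 1) * cheb a (n + 2) - cheb a (n + 1)).det := by
      intro z
      have hco : ⇑(Polynomial.evalRingHom z) = Polynomial.eval z := rfl
      have h1 : Polynomial.eval z ((QtriR (n + 2) l (Function.update aP (n + 2) Y)).det)
          = (Qtri (n + 2) l (Function.update a (n + 2) (X + z • 1))).det := by
        have h := RingHom.map_det (Polynomial.evalRingHom z)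
          (QtriR (n + 2) l (Function.update aP (n + 2) Y))
        rw [RingHom.mapMatrix_apply, hco] at h
        rw [← hco] at h ⊢
        rw [h, QtriR_map, Qtri_eq_QtriR, hco, hupdate z]
      have h2 : Polynomial.eval z ((Y * chebR aP (n + 2) - chebR aP (n + 1)).det)
          = ((X + z • 1) * cheb a (n + 2) - cheb a (n + 1)).det := by
        have h := RingHom.map_det (Polynomial.evalRingHom z)
          (Y * chebR aP (n + 2) - chebR aP (n + 1))
        rw [RingHom.mapMatrix_apply] at h
        rw [← hco]
        rw [h, Matrix.map_sub _ (map_sub (Polynomial.evalRingHom z)),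
          Matrix.map_mul, chebR_map, chebR_map, hco, hmapY z]
        have hfun : (fun k => (aP k).map (Polynomial.eval z)) = a := funext (hmapak z)
        rw [hfun, ← cheb_eq_chebR, ← cheb_eq_chebR]
      rw [hP, Polynomial.eval_sub, h1, h2]
    have key : ∀ z : ℂ, IsUnit (X + z • (1 : Matrix (Fin l) (Fin l) ℂ)) →
        P.eval z = 0 := by
      intro z hz
      rw [hev z, sub_eq_zero]
      exact step_unit l n a (X + z • 1) hz ih
    have hq : ∀ z : ℂ, Polynomial.eval z Y.det = (X + z • 1).det := by
      intro z
      have hco : ⇑(Polynomial.evalRingHom z) = Polynomial.eval z := rfl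
      have h := RingHom.map_det (Polynomial.evalRingHom z) Y
      rw [RingHom.mapMatrix_apply, hco] at h
      rw [h, hmapY z]
    have hqY : Y = Matrix.charmatrix (-X) := by
      ext i j
      rw [Matrix.charmatrix_apply]
      simp only [hY, Matrix.add_apply, Matrix.smul_apply, Matrix.one_apply,
        Matrix.map_apply, Matrix.diagonal_apply, Matrix.neg_apply, map_neg,
        smul_eq_mul]
      split_ifs <;> ring
    have hqne : Y.det ≠ 0 := by
      rw [hqY]
      have : (Matrix.charmatrix (-X)).det = (-X).charpoly := rfl
      rw [this]
      exact (Matrix.charpoly_monic (-X)).ne_zero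
    have hPzero : P = 0 := by
      by_contra hne
      refine Set.infinite_univ (α := ℂ) ?_
      apply Set.Finite.subset
        ((Polynomial.finite_setOf_isRoot hqne).union (Polynomial.finite_setOf_isRoot hne))
      intro z _
      by_cases hz : Polynomial.eval z Y.det = 0
      · exact Or.inl hz
      · refine Or.inr (key z ?_)
        rw [Matrix.isUnit_iff_isUnit_det]
        rw [hq z] at hz
        exact isUnit_iff_ne_zero.mpr hz
    have h0 := hev 0
    rw [hPzero, Polynomial.eval_zero] at h0
    have hX0 : X + (0 : ℂ) • (1 : Matrix (Fin l) (Fin l) ℂ) = X := by simp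
    rw [hX0] at h0
    exact sub_eq_zero.mp h0.symm

/-- `det(𝔔ₘ) = det(𝔭ₘ(𝔞₁,…,𝔞ₘ))` for all `m ≥ 1`, where `𝔞₁,…,𝔞ₘ` are
invertible. -/
theorem det_Qtri_eq_det_cheb (m l : ℕ) (hm : 1 ≤ m)
    (a : ℕ → Matrix (Fin l) (Fin l) ℂ)
    (hinv : ∀ k, 1 ≤ k → k ≤ m → IsUnit (a k)) :
    (Qtri m l a).det = (cheb a (m + 1)).det := by
  obtain ⟨n, rfl⟩ : ∃ n, m = n + 1 := ⟨m - 1, by omega⟩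
  have h1 : Qtri (n + 1) l a
      = Qtri (n + 1) l (Function.update a (n + 1) (a (n + 1))) := by
    rw [Function.update_eq_self]
  rw [h1, claim l n a (a (n + 1))]
  rfl
end

section
/- Let N ≥ 2, let (𝔞ₙ)_{n≥1} be an N-periodic sequence of l×l complex matrices (𝔞_{n+N} = 𝔞ₙ), and let 𝔪 be an l×l complex matrix commuting with 𝔞₁,…,𝔞_N. Then every solution (𝔶ₖ)_{k≥0} of the recurrence 𝔶_{n+1} = 𝔞ₙ·𝔶ₙ − 𝔶_{n−1} (n ≥ 1) satisfies 𝔶_{k+N} = 𝔪·𝔶ₖ for all k ≥ 0 if and only if 𝔭_{N−1}(𝔞₁,…,𝔞_{N−1}) = O, 𝔭_{N−2}(𝔞₂,…,𝔞_{N−1}) = −𝔪, 𝔭_N(𝔞₁,…,𝔞_N) = 𝔪, and 𝔭_{N−1}(𝔞₂,…,𝔞_N) = O. Moreover, under these conditions, M(𝔞_N)·M(𝔞_{N−1})···M(𝔞₁) equals the 2l×2l block diagonal matrix with both diagonal blocks equal to 𝔪. -/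
noncomputable def rfun {l : ℕ} (a : ℕ → Matrix (Fin l) (Fin l) ℂ) :
    ℕ → Matrix (Fin l) (Fin l) ℂ
  | 0 => 1
  | (k + 1) => -(cheb (fun i => a (i + 1)) k)

lemma cheb_rec {l : ℕ} (a : ℕ → Matrix (Fin l) (Fin l) ℂ) (k : ℕ) :
    cheb a (k + 2) = a (k + 1) * cheb a (k + 1) - cheb a k := rfl

lemma rfun_rec {l : ℕ} (a : ℕ → Matrix (Fin l) (Fin l) ℂ) (k : ℕ) :
    rfun a (k + 2) = a (k + 1) * rfun a (k + 1) - rfun a k := by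
  cases k with
  | zero => simp [rfun, cheb]
  | succ k =>
    show -(cheb (fun i => a (i + 1)) (k + 2)) = _
    rw [cheb_rec]
    show -(a (k + 2) * cheb (fun i => a (i+1)) (k + 1) - cheb (fun i => a (i+1)) k) = _
    simp [rfun, mul_neg, sub_eq_neg_add]
    exact add_comm _ _

lemma prod_eq {l : ℕ} (a : ℕ → Matrix (Fin l) (Fin l) ℂ) (k : ℕ) :
    (((List.range k).map fun i => Mblk (a (i + 1))).reverse).prod =
      Matrix.fromBlocks (cheb a (k + 1)) (rfun a (k + 1)) (cheb a k) (rfun a k) := by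
  induction k with
  | zero => simp [cheb, rfun, ← Matrix.fromBlocks_one]
  | succ k ih =>
    rw [List.range_succ, List.map_append, List.reverse_append]
    simp only [List.map_cons, List.map_nil, List.reverse_cons, List.reverse_nil,
      List.nil_append, List.prod_cons, List.singleton_append, List.prod_cons]
    rw [ih, Mblk, Matrix.fromBlocks_multiply, cheb_rec, rfun_rec]
    simp [sub_eq_add_neg]

/-- For an `N`-periodic sequence `(𝔞ₙ)_{n≥1}` and a matrix `𝔪` commuting with
`𝔞₁,…,𝔞_N`: every solution of `𝔶_{n+1} = 𝔞ₙ𝔶ₙ − 𝔶_{n−1}` has monodromy `𝔪`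
(i.e. `𝔶_{k+N} = 𝔪𝔶ₖ` for all `k ≥ 0`) if and only if
`𝔭_{N−1}(𝔞₁,…,𝔞_{N−1}) = O`, `𝔭_{N−2}(𝔞₂,…,𝔞_{N−1}) = −𝔪`,
`𝔭_N(𝔞₁,…,𝔞_N) = 𝔪` and `𝔭_{N−1}(𝔞₂,…,𝔞_N) = O`.  Moreover, under these
conditions `M(𝔞_N)···M(𝔞₁)` is the block diagonal matrix `diag(𝔪, 𝔪)`. -/
theorem monodromy_iff_chebyshev {l : ℕ} (N : ℕ) (hN : 2 ≤ N)
    (a : ℕ → Matrix (Fin l) (Fin l) ℂ) (hper : ∀ n, 1 ≤ n → a (n + N) = a n)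
    (m : Matrix (Fin l) (Fin l) ℂ)
    (hcomm : ∀ k, 1 ≤ k → k ≤ N → m * a k = a k * m) :
    ((∀ y : ℕ → Matrix (Fin l) (Fin l) ℂ,
        (∀ n, 1 ≤ n → y (n + 1) = a n * y n - y (n - 1)) →
        ∀ k, y (k + N) = m * y k) ↔
      (cheb a N = 0 ∧ cheb (fun i => a (i + 1)) (N - 1) = -m ∧
        cheb a (N + 1) = m ∧ cheb (fun i => a (i + 1)) N = 0)) ∧
    ((cheb a N = 0 ∧ cheb (fun i => a (i + 1)) (N - 1) = -m ∧
        cheb a (N + 1) = m ∧ cheb (fun i => a (i + 1)) N = 0) →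
      (((List.range N).map fun i => Mblk (a (i + 1))).reverse).prod =
        Matrix.fromBlocks m 0 0 m) := by
  obtain ⟨N', rfl⟩ : ∃ N', N = N' + 2 := ⟨N - 2, by omega⟩
  have hN1 : N' + 2 - 1 = N' + 1 := rfl
  rw [hN1]
  have hsolC : ∀ n, 1 ≤ n → cheb a (n + 1) = a n * cheb a n - cheb a (n - 1) := by
    intro n hn
    obtain ⟨k, rfl⟩ : ∃ k, n = k + 1 := ⟨n - 1, by omega⟩
    simpa using cheb_rec a k
  have hsolR : ∀ n, 1 ≤ n → rfun a (n + 1) = a n * rfun a n - rfun a (n - 1) := by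
    intro n hn
    obtain ⟨k, rfl⟩ : ∃ k, n = k + 1 := ⟨n - 1, by omega⟩
    simpa using rfun_rec a k
  have hcomm' : ∀ n, 1 ≤ n → m * a n = a n * m := by
    intro n
    induction n using Nat.strong_induction_on with
    | _ n ih =>
      intro hn
      by_cases h : n ≤ N' + 2
      · exact hcomm n hn h
      · have h2 : 1 ≤ n - (N' + 2) := by omega
        have hp := hper (n - (N' + 2)) h2
        rw [show n - (N' + 2) + (N' + 2) = n from by omega] at hp
        rw [hp]
        exact ih (n - (N' + 2)) (by omega) h2
  have shiftLem : ∀ c : ℕ → Matrix (Fin l) (Fin l) ℂ,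
      (∀ k, c (k + 2) = a (k + 1) * c (k + 1) - c k) →
      c (N' + 2) = m * c 0 → c (N' + 2 + 1) = m * c 1 →
      ∀ k, c (k + (N' + 2)) = m * c k := by
    intro c hrec h0 h1 k
    induction k using Nat.strong_induction_on with
    | _ k ih =>
      match k with
      | 0 => simpa using h0
      | 1 => rw [show 1 + (N' + 2) = N' + 2 + 1 from by omega]; exact h1
      | (k + 2) =>
        rw [show k + 2 + (N' + 2) = (k + (N' + 2)) + 2 from by omega, hrec,
          show k + (N' + 2) + 1 = (k + 1) + (N' + 2) from by omega,
          hper (k + 1) (by omega), ih (k + 1) (by omega), ih k (by omega),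
          hrec k, Matrix.mul_sub, ← mul_assoc, ← mul_assoc,
          hcomm' (k + 1) (by omega)]
  have yrep : ∀ y : ℕ → Matrix (Fin l) (Fin l) ℂ,
      (∀ n, 1 ≤ n → y (n + 1) = a n * y n - y (n - 1)) →
      ∀ k, y k = cheb a k * y 1 + rfun a k * y 0 := by
    intro y hy k
    induction k using Nat.strong_induction_on with
    | _ k ih =>
      match k with
      | 0 => simp [cheb, rfun]
      | 1 => simp [cheb, rfun]
      | (k + 2) =>
        have h := hy (k + 1) (by omega)
        simp only [Nat.add_sub_cancel] at h
        rw [h, ih (k + 1) (by omega), ih k (by omega), cheb_rec, rfun_rec]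
        rw [Matrix.mul_add, ← mul_assoc, ← mul_assoc]
        simp only [sub_mul, add_mul]
        abel
  have rfun1 : rfun a 1 = 0 := by
    show -(cheb (fun i => a (i + 1)) 0) = 0
    simp [cheb]
  constructor
  · constructor
    · intro h
      have hC0 := h (cheb a) hsolC 0
      have hC1 := h (cheb a) hsolC 1
      have hR0 := h (rfun a) hsolR 0
      have hR1 := h (rfun a) hsolR 1
      simp only [zero_add] at hC0 hR0
      rw [show cheb a 0 = 0 from rfl, mul_zero] at hC0
      rw [show (1 : ℕ) + (N' + 2) = N' + 2 + 1 from by omega,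
        show cheb a 1 = 1 from rfl, mul_one] at hC1
      rw [show rfun a 0 = 1 from rfl, mul_one] at hR0
      rw [show (1 : ℕ) + (N' + 2) = N' + 2 + 1 from by omega, rfun1, mul_zero] at hR1
      refine ⟨hC0, ?_, hC1, ?_⟩
      · have : -(cheb (fun i => a (i + 1)) (N' + 1)) = m := hR0
        rw [← this, neg_neg]
      · have : -(cheb (fun i => a (i + 1)) (N' + 2)) = 0 := hR1
        exact neg_eq_zero.mp this
    · rintro ⟨h1, h2, h3, h4⟩ y hy k
      have hA : ∀ k, cheb a (k + (N' + 2)) = m * cheb a k := by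
        refine shiftLem (cheb a) (cheb_rec a) ?_ ?_
        · rw [h1, show cheb a 0 = 0 from rfl, mul_zero]
        · rw [h3, show cheb a 1 = 1 from rfl, mul_one]
      have hR : ∀ k, rfun a (k + (N' + 2)) = m * rfun a k := by
        refine shiftLem (rfun a) (rfun_rec a) ?_ ?_
        · show -(cheb (fun i => a (i + 1)) (N' + 1)) = m * rfun a 0
          rw [h2, show rfun a 0 = 1 from rfl, mul_one, neg_neg]
        · show -(cheb (fun i => a (i + 1)) (N' + 2)) = m * rfun a 1
          rw [h4, rfun1, mul_zero, neg_zero]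
      rw [yrep y hy (k + (N' + 2)), yrep y hy k, hA, hR, Matrix.mul_add,
        mul_assoc, mul_assoc]
  · rintro ⟨h1, h2, h3, h4⟩
    rw [prod_eq, h1, h3]
    have e1 : rfun a (N' + 2 + 1) = 0 := by
      show -(cheb (fun i => a (i + 1)) (N' + 2)) = 0
      rw [h4, neg_zero]
    have e2 : rfun a (N' + 2) = m := by
      show -(cheb (fun i => a (i + 1)) (N' + 1)) = m
      rw [h2, neg_neg]
    rw [e1, e2]
end
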